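/- arXiv:1005.5414 — 3 statements merged into one kernel-verified Lean document; each statement's English description precedes it below -/
import Mathlib

section
/- Let ξ and η be integrable random variables with ξ ≤_st η, let ξ_1, ξ_2, … and η_1, η_2, … be independent copies of ξ and η respectively (all mutually independent), and let K be an integer-valued random variable with 0 ≤ K ≤ m for some integer m, independent of all the ξ_j and η_j, such that E[K] = k is an integer. Then Σ_{j=1}^{k} ξ_j + Σ_{j=k+1}^{m} η_j ≤_cx Σ_{j=1}^{K} ξ_j + Σ_{j=K+1}^{m} η_j. -/
open MeasureTheory ProbabilityTheory
open scoped ENNReal NNReal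

/-- Index-dependent codomain used to express joint independence of the integer-valued
variable `K` (index `none`) and the real-valued variables `ξ_j` (indices `some (inl j)`)
and `η_j` (indices `some (inr j)`). -/
def mixCodomain : Option (ℕ ⊕ ℕ) → Type
  | none => ℕ
  | some _ => ℝ

instance : ∀ i, MeasurableSpace (mixCodomain i)
  | none => inferInstanceAs (MeasurableSpace ℕ)
  | some _ => inferInstanceAs (MeasurableSpace ℝ)

/-- The combined family `(K, (ξ_j)_j, (η_j)_j)`. -/
def mixFam {Ω : Type*} (ξ η : ℕ → Ω → ℝ) (K : Ω → ℕ) : ∀ i, Ω → mixCodomain i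
  | none => K
  | some (.inl j) => ξ j
  | some (.inr j) => η j



section ConvexAux

variable {φ : ℝ → ℝ}

lemma rsco_affine_convexOn (a b : ℝ) : ConvexOn ℝ Set.univ (fun x : ℝ => a * x + b) := by
  refine ⟨convex_univ, fun x _ y _ p q hp hq hpq => le_of_eq ?_⟩
  simp only [smul_eq_mul]
  linear_combination (-b) * hpq

lemma rsco_four_point (hφ : ConvexOn ℝ Set.univ φ) {a b c d : ℝ} (hab : a ≤ b) (hac : a ≤ c)
    (h : b + c = a + d) : φ b + φ c ≤ φ a + φ d := by
  have hbd : b ≤ d := by linarith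
  have hcd : c ≤ d := by linarith
  rcases eq_or_lt_of_le (hab.trans hbd) with heq | hlt
  · have hba : b = a := le_antisymm (heq ▸ hbd) hab
    have hcd' : c = d := by linarith
    rw [hba, hcd']
  · have hda : d - a ≠ 0 := by linarith
    set t := (d - b) / (d - a) with ht
    have key : t * (d - a) = d - b := div_mul_cancel₀ _ hda
    have h0 : 0 ≤ t := div_nonneg (by linarith) (by linarith)
    have h1' : 0 ≤ 1 - t := by
      have : t ≤ 1 := (div_le_one (by linarith)).2 (by linarith)
      linarith
    have e1 : t * a + (1 - t) * d = b := by
      have : t * a + (1 - t) * d = d - t * (d - a) := by ring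
      rw [this, key]; ring
    have e2 : (1 - t) * a + t * d = c := by
      have : (1 - t) * a + t * d = a + t * (d - a) := by ring
      rw [this, key]; linarith
    have i1 := hφ.2 (Set.mem_univ a) (Set.mem_univ d) h0 h1' (by ring)
    have i2 := hφ.2 (Set.mem_univ a) (Set.mem_univ d) h1' h0 (by ring)
    simp only [smul_eq_mul] at i1 i2
    rw [e1] at i1
    rw [e2] at i2
    linarith

lemma rsco_diff_mono (hφ : ConvexOn ℝ Set.univ φ) {x1 x2 : ℝ} (hx : x1 ≤ x2) (c : ℝ) :
    Monotone (fun y => φ (c + x2 + y) - φ (c + x1 + y)) := by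
  intro y1 y2 hy
  have := rsco_four_point hφ (a := c + x1 + y1) (b := c + x2 + y1) (c := c + x1 + y2)
    (d := c + x2 + y2) (by linarith) (by linarith) (by ring)
  simp only
  linarith

lemma rsco_support_line (hφ : ConvexOn ℝ Set.univ φ) (q : ℝ) :
    ∃ d : ℝ, ∀ x, φ q + d * (x - q) ≤ φ x := by
  set S : Set ℝ := (fun x => (φ q - φ x) / (q - x)) '' Set.Iio q with hS
  have hne : S.Nonempty := ⟨_, ⟨q - 1, by simp, rfl⟩⟩
  have hbdd : BddAbove S := by
    refine ⟨(φ (q + 1) - φ q) / (q + 1 - q), ?_⟩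
    rintro s ⟨x, hx, rfl⟩
    have := hφ.slope_mono_adjacent (Set.mem_univ x) (Set.mem_univ (q + 1)) hx (by linarith)
    exact this
  refine ⟨sSup S, fun x => ?_⟩
  rcases lt_trichotomy x q with hlt | heq | hgt
  · have hmem : (φ q - φ x) / (q - x) ≤ sSup S := le_csSup hbdd ⟨x, hlt, rfl⟩
    have hpos : 0 < q - x := by linarith
    have : (φ q - φ x) / (q - x) * (q - x) ≤ sSup S * (q - x) := by
      exact mul_le_mul_of_nonneg_right hmem hpos.le
    rw [div_mul_cancel₀ _ hpos.ne'] at this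
    nlinarith
  · simp [heq]
  · have hub : sSup S ≤ (φ x - φ q) / (x - q) := by
      refine csSup_le hne ?_
      rintro s ⟨y, hy, rfl⟩
      exact hφ.slope_mono_adjacent (Set.mem_univ y) (Set.mem_univ x) hy hgt
    have hpos : 0 < x - q := by linarith
    have := mul_le_mul_of_nonneg_right hub hpos.le
    rw [div_mul_cancel₀ _ hpos.ne'] at this
    nlinarith

end ConvexAux


section ConvexAux

variable {ψ : ℝ → ℝ}

-- assume previous lemmas; use sorry placeholders to test this chunk standalone
lemma rsco_affine_convexOn' (a b : ℝ) : ConvexOn ℝ Set.univ (fun x : ℝ => a * x + b) := by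
  refine ⟨convex_univ, fun x _ y _ p q hp hq hpq => le_of_eq ?_⟩
  simp only [smul_eq_mul]
  linear_combination (-b) * hpq

lemma rsco_lip_max {f g : ℝ → ℝ} {Kf Kg : NNReal} (hf : LipschitzWith Kf f)
    (hg : LipschitzWith Kg g) : LipschitzWith (max Kf Kg) (fun x => max (f x) (g x)) := by
  rw [lipschitzWith_iff_dist_le_mul]
  intro x y
  have h1 := hf.dist_le_mul x y
  have h2 := hg.dist_le_mul x y
  rw [Real.dist_eq] at h1 h2 ⊢
  refine (abs_max_sub_max_le_max _ _ _ _).trans (max_le ?_ ?_)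
  · exact h1.trans (mul_le_mul_of_nonneg_right (by exact_mod_cast le_sup_left) (abs_nonneg _))
  · exact h2.trans (mul_le_mul_of_nonneg_right (by exact_mod_cast le_sup_right) (abs_nonneg _))

lemma rsco_lip_affine (a b : ℝ) : LipschitzWith ‖a‖₊ (fun x : ℝ => a * x + b) := by
  rw [lipschitzWith_iff_dist_le_mul]
  intro x y
  rw [Real.dist_eq, Real.dist_eq]
  have : a * x + b - (a * y + b) = a * (x - y) := by ring
  rw [this, abs_mul, coe_nnnorm, Real.norm_eq_abs]

lemma rsco_line_dense (hψ : ConvexOn ℝ Set.univ ψ) (d : ℝ → ℝ)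
    (hd : ∀ q x : ℝ, ψ q + d q * (x - q) ≤ ψ x) (x : ℝ) {ε : ℝ} (hε : 0 < ε) :
    ∃ q : ℚ, ψ x - ε < ψ (q : ℝ) + d (q : ℝ) * (x - (q : ℝ)) := by
  set C1 := |d x| with hC1
  set B := |ψ (x + 1) - ψ x| with hB
  set C2 := 2 * (B + C1 + 1) with hC2
  have hC1n : 0 ≤ C1 := abs_nonneg _
  have hBn : 0 ≤ B := abs_nonneg _
  have hC2n : 0 ≤ C2 := by positivity
  have hden : 0 < C1 + C2 + 1 := by linarith
  set δ := min (1/2 : ℝ) (ε / (C1 + C2 + 1)) with hδ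
  have hδ0 : 0 < δ := lt_min (by norm_num) (div_pos hε hden)
  obtain ⟨q, hq1, hq2⟩ := exists_rat_btwn (show x < x + δ by linarith)
  refine ⟨q, ?_⟩
  set s := (q : ℝ) - x with hs
  have hs0 : 0 < s := by simp only [hs]; linarith
  have hsδ : s < δ := by simp only [hs]; linarith
  have hs12 : s ≤ 1/2 := le_of_lt (hsδ.trans_le (min_le_left _ _))
  -- (1) lower bound on ψ q
  have h1 : ψ x - C1 * s ≤ ψ (q : ℝ) := by
    have := hd x (q : ℝ)
    have habs : -(C1 * s) ≤ d x * ((q : ℝ) - x) := by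
      have : -C1 ≤ d x := neg_abs_le _
      nlinarith
    nlinarith [hd x (q : ℝ)]
  -- (2) upper bound on ψ q
  have h2 : ψ (q : ℝ) ≤ ψ x + B := by
    have hcomb := hψ.2 (Set.mem_univ x) (Set.mem_univ (x + 1)) (by linarith : (0:ℝ) ≤ 1 - s)
      (le_of_lt hs0) (by ring)
    simp only [smul_eq_mul] at hcomb
    have hxq : (1 - s) * x + s * (x + 1) = (q : ℝ) := by simp only [hs]; ring
    rw [hxq] at hcomb
    nlinarith [le_abs_self (ψ (x+1) - ψ x)]
  -- (3) upper bound on d q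
  have h3 : d (q : ℝ) ≤ C2 := by
    rcases le_or_gt (d (q : ℝ)) 0 with h | h
    · linarith
    · have hkey := hd (q : ℝ) (x + 1)
      -- d q * (x + 1 - q) ≤ ψ (x+1) - ψ q
      have hnum : d (q : ℝ) * (x + 1 - (q : ℝ)) ≤ B + C1 * s := by
        nlinarith [le_abs_self (ψ (x+1) - ψ x), h1]
      have hhalf : (1/2 : ℝ) ≤ x + 1 - (q : ℝ) := by simp only [hs] at hs12 ⊢; linarith
      nlinarith
  -- conclude
  have htarget : ψ (q : ℝ) + d (q : ℝ) * (x - (q : ℝ)) = ψ (q : ℝ) - d (q : ℝ) * s := by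
    simp only [hs]; ring
  rw [htarget]
  have hsmall : (C1 + C2) * s < ε := by
    have : s < ε / (C1 + C2 + 1) := hsδ.trans_le (min_le_right _ _)
    have := mul_lt_mul_of_pos_left this hden
    rw [mul_div_cancel₀ _ hden.ne'] at this
    nlinarith
  rcases le_or_gt (d (q : ℝ)) 0 with h | h
  · nlinarith
  · nlinarith

private noncomputable def rscoTruncAux (ℓ : ℕ → ℝ → ℝ) : ℕ → ℝ → ℝ
  | 0 => fun _ => 0
  | (N+1) => fun x => max (rscoTruncAux ℓ N x) (ℓ N x)

lemma rsco_trunc_family (hψ : ConvexOn ℝ Set.univ ψ) (hψ0 : ∀ x, 0 ≤ ψ x) :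
    ∃ Ψ : ℕ → ℝ → ℝ, (∀ N, ConvexOn ℝ Set.univ (Ψ N)) ∧
      (∀ N, ∃ L : NNReal, LipschitzWith L (Ψ N)) ∧
      (∀ N x, 0 ≤ Ψ N x) ∧ (∀ N x, Ψ N x ≤ ψ x) ∧
      (∀ x, Monotone (fun N => Ψ N x)) ∧
      (∀ x (ε : ℝ), 0 < ε → ∃ N, ψ x - ε < Ψ N x) := by
  classical
  have hsup : ∀ q : ℝ, ∃ dq : ℝ, ∀ x, ψ q + dq * (x - q) ≤ ψ x := fun q =>
    rsco_support_line hψ q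
  choose d hd using hsup
  set e : ℕ → ℚ := fun n => (Denumerable.eqv ℚ).symm n with he
  have hesurj : ∀ q : ℚ, ∃ n, e n = q := fun q =>
    ⟨Denumerable.eqv ℚ q, Equiv.symm_apply_apply _ _⟩
  set ℓ : ℚ → ℝ → ℝ := fun q x => ψ (q : ℝ) + d (q : ℝ) * (x - (q : ℝ)) with hℓ
  set Ψ : ℕ → ℝ → ℝ := rscoTruncAux (fun n => ℓ (e n)) with hΨ
  have hΨsucc : ∀ N x, Ψ (N + 1) x = max (Ψ N x) (ℓ (e N) x) := fun N x => rfl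
  have hℓconv : ∀ q : ℚ, ConvexOn ℝ Set.univ (ℓ q) := by
    intro q
    have := rsco_affine_convexOn' (d (q : ℝ)) (ψ (q : ℝ) - d (q : ℝ) * (q : ℝ))
    convert this using 1
    funext x; simp only [hℓ]; ring
  have hℓle : ∀ (q : ℚ) x, ℓ q x ≤ ψ x := fun q x => hd (q : ℝ) x
  refine ⟨Ψ, ?_, ?_, ?_, ?_, ?_, ?_⟩
  · intro N
    induction N with
    | zero => exact convexOn_const 0 convex_univ
    | succ n ih =>
      have := ih.sup (hℓconv (e n))
      rw [show Ψ (n + 1) = Ψ n ⊔ ℓ (e n) from funext fun x => hΨsucc n x]; exact this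
  · intro N
    induction N with
    | zero => exact ⟨0, LipschitzWith.const' 0⟩
    | succ n ih =>
      obtain ⟨L, hL⟩ := ih
      refine ⟨max L ‖d ((e n : ℚ) : ℝ)‖₊, ?_⟩
      have haff : LipschitzWith ‖d ((e n : ℚ) : ℝ)‖₊ (ℓ (e n)) := by
        have := rsco_lip_affine (d ((e n : ℚ) : ℝ)) (ψ ((e n : ℚ) : ℝ) - d ((e n : ℚ) : ℝ) * ((e n : ℚ) : ℝ))
        convert this using 1
        funext x; simp only [hℓ]; ring
      exact rsco_lip_max hL haff
  · intro N x
    induction N with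
    | zero => exact le_refl 0
    | succ n ih => exact ih.trans (le_max_left _ _)
  · intro N x
    induction N with
    | zero => exact hψ0 x
    | succ n ih => exact max_le ih (hℓle (e n) x)
  · intro x
    refine monotone_nat_of_le_succ fun N => ?_
    rw [hΨsucc]
    exact le_max_left _ _
  · intro x ε hε
    obtain ⟨q, hq⟩ := rsco_line_dense hψ d hd x hε
    obtain ⟨n, hn⟩ := hesurj q
    refine ⟨n + 1, ?_⟩
    have : ℓ q x ≤ Ψ (n + 1) x := by
      rw [hΨsucc, hn]
      exact le_max_right _ _
    exact hq.trans_le this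

end ConvexAux
section StochOrder

open Set

variable {μ ν : Measure ℝ}

lemma rsco_iInter_Ioi (t : ℝ) : (⋂ n : ℕ, Ioi (t - 1 / (n + 1))) = Ici t := by
  ext x
  simp only [mem_iInter, mem_Ioi, mem_Ici]
  constructor
  · intro hx
    by_contra hxt
    push_neg at hxt
    obtain ⟨n, hn⟩ := exists_nat_one_div_lt (show (0:ℝ) < t - x by linarith)
    have := hx n
    push_cast at hn this
    linarith
  · intro hx n
    have : 0 < 1 / ((n:ℝ) + 1) := by positivity
    linarith

lemma rsco_Ici_meas [IsProbabilityMeasure μ] [IsProbabilityMeasure ν]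
    (h : ∀ t, μ (Set.Ioi t) ≤ ν (Set.Ioi t)) (t : ℝ) : μ (Set.Ici t) ≤ ν (Set.Ici t) := by
  have hanti : Antitone (fun n : ℕ => Ioi (t - 1 / ((n:ℝ) + 1))) := by
    intro a b hab
    apply Ioi_subset_Ioi
    have : (1:ℝ) / ((b:ℝ) + 1) ≤ 1 / ((a:ℝ) + 1) := by
      apply one_div_le_one_div_of_le (by positivity)
      exact_mod_cast Nat.succ_le_succ hab
    linarith
  have hμt : Filter.Tendsto (fun n : ℕ => μ (Ioi (t - 1 / ((n:ℝ) + 1)))) Filter.atTop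
      (nhds (μ (⋂ n : ℕ, Ioi (t - 1 / ((n:ℝ) + 1))))) :=
    tendsto_measure_iInter_atTop (fun n => (measurableSet_Ioi).nullMeasurableSet)
      hanti ⟨0, measure_ne_top _ _⟩
  have hνt : Filter.Tendsto (fun n : ℕ => ν (Ioi (t - 1 / ((n:ℝ) + 1)))) Filter.atTop
      (nhds (ν (⋂ n : ℕ, Ioi (t - 1 / ((n:ℝ) + 1))))) :=
    tendsto_measure_iInter_atTop (fun n => (measurableSet_Ioi).nullMeasurableSet)
      hanti ⟨0, measure_ne_top _ _⟩
  rw [rsco_iInter_Ioi] at hμt hνt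
  exact le_of_tendsto_of_tendsto' hμt hνt (fun n => h _)

lemma rsco_upperSet_meas [IsProbabilityMeasure μ] [IsProbabilityMeasure ν]
    (h : ∀ t, μ (Set.Ioi t) ≤ ν (Set.Ioi t)) {s : Set ℝ} (hs : IsUpperSet s) :
    μ s ≤ ν s := by
  rcases Set.eq_empty_or_nonempty s with rfl | hne
  · simp
  by_cases hbdd : BddBelow s
  · set t0 := sInf s with ht0
    by_cases hmem : t0 ∈ s
    · have hset : s = Ici t0 := by
        apply subset_antisymm
        · exact fun z hz => csInf_le hbdd hz
        · exact fun z hz => hs hz hmem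
      rw [hset]
      exact rsco_Ici_meas h t0
    · have hset : s = Ioi t0 := by
        apply subset_antisymm
        · intro z hz
          refine lt_of_le_of_ne (csInf_le hbdd hz) ?_
          intro e
          exact hmem (by rw [ht0, e]; exact hz)
        · intro y hy
          obtain ⟨z, hz, hzy⟩ := exists_lt_of_csInf_lt hne hy
          exact hs hzy.le hz
      rw [hset]
      exact h t0
  · have hset : s = Set.univ := by
      apply Set.eq_univ_of_forall
      intro x
      obtain ⟨y, hy, hyx⟩ := (not_bddBelow_iff).1 hbdd x
      exact hs hyx.le hy
    rw [hset]
    simp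

lemma rsco_integral_mono_stoch [IsProbabilityMeasure μ] [IsProbabilityMeasure ν]
    (h : ∀ t, μ (Set.Ioi t) ≤ ν (Set.Ioi t)) {g : ℝ → ℝ} (hg : Monotone g)
    (hgμ : Integrable g μ) (hgν : Integrable g ν) : ∫ x, g x ∂μ ≤ ∫ x, g x ∂ν := by
  have hofReal : ∀ (ρ : Measure ℝ) (f : ℝ → ℝ), Measurable f →
      ∫⁻ a, ENNReal.ofReal (f a) ∂ρ = ∫⁻ t in Ioi (0:ℝ), ρ {a | t < max (f a) 0} ∂(volume) := by
    intro ρ f hf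
    have heq : ∀ a, ENNReal.ofReal (f a) = ENNReal.ofReal (max (f a) 0) := by
      intro a
      rcases le_total (f a) 0 with h' | h'
      · rw [max_eq_right h', ENNReal.ofReal_of_nonpos h', ENNReal.ofReal_zero]
      · rw [max_eq_left h']
    calc ∫⁻ a, ENNReal.ofReal (f a) ∂ρ = ∫⁻ a, ENNReal.ofReal (max (f a) 0) ∂ρ :=
          lintegral_congr heq
      _ = _ := lintegral_eq_lintegral_meas_lt ρ (Filter.Eventually.of_forall fun a => le_max_right _ _)
          ((hf.max measurable_const).aemeasurable)
  have hfin : ∀ (ρ : Measure ℝ) (f : ℝ → ℝ), Integrable f ρ →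
      ∫⁻ a, ENNReal.ofReal (f a) ∂ρ ≠ ⊤ := by
    intro ρ f hf
    refine ne_of_lt (lt_of_le_of_lt ?_ hf.hasFiniteIntegral)
    apply lintegral_mono
    intro a
    simp only
    rw [Real.enorm_eq_ofReal_abs]
    exact ENNReal.ofReal_le_ofReal (le_abs_self _)
  -- positive parts
  have hP : ∫⁻ a, ENNReal.ofReal (g a) ∂μ ≤ ∫⁻ a, ENNReal.ofReal (g a) ∂ν := by
    rw [hofReal μ g hg.measurable, hofReal ν g hg.measurable]
    apply lintegral_mono
    intro t
    simp only
    apply rsco_upperSet_meas h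
    intro a b hab ha
    exact lt_of_lt_of_le ha (max_le_max (hg hab) le_rfl)
  -- negative parts
  have hN : ∫⁻ a, ENNReal.ofReal (-g a) ∂ν ≤ ∫⁻ a, ENNReal.ofReal (-g a) ∂μ := by
    rw [hofReal μ (fun a => -g a) hg.measurable.neg, hofReal ν (fun a => -g a) hg.measurable.neg]
    apply lintegral_mono
    intro t
    simp only
    set U : Set ℝ := {a | max (-g a) 0 ≤ t} with hU
    have hUupper : IsUpperSet U := by
      intro a b hab ha
      refine le_trans (max_le_max (neg_le_neg (hg hab)) le_rfl) ha
    have hUm : MeasurableSet U := by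
      have : U = (fun a => max (-g a) 0) ⁻¹' (Iic t) := rfl
      rw [this]
      exact (hg.measurable.neg.max measurable_const) measurableSet_Iic
    have hcompl : ∀ ρ : Measure ℝ, IsProbabilityMeasure ρ →
        ρ {a : ℝ | t < max (-g a) 0} = 1 - ρ U := by
      intro ρ hρ
      have : {a : ℝ | t < max (-g a) 0} = Uᶜ := by
        ext a
        simp only [hU, Set.mem_setOf_eq, Set.mem_compl_iff, not_le]
      rw [this, measure_compl hUm (measure_ne_top _ _), measure_univ]
    rw [hcompl μ inferInstance, hcompl ν inferInstance]
    exact tsub_le_tsub_left (rsco_upperSet_meas h hUupper) 1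
  rw [integral_eq_lintegral_pos_part_sub_lintegral_neg_part hgμ,
    integral_eq_lintegral_pos_part_sub_lintegral_neg_part hgν]
  have h1 := ENNReal.toReal_mono (hfin ν g hgν) hP
  have h2 := ENNReal.toReal_mono (hfin μ (fun a => -g a) hgμ.neg) hN
  linarith

end StochOrder
section Exchange

lemma rsco_lip_translate (c : ℝ) : LipschitzWith 1 (fun w : ℝ => c + w) := by
  rw [lipschitzWith_iff_dist_le_mul]
  intro x y
  rw [Real.dist_eq, Real.dist_eq]
  simp only [NNReal.coe_one, one_mul]
  have : c + x - (c + y) = x - y := by ring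
  rw [this]

lemma rsco_integrable_of_lip {ρ : Measure ℝ} [IsProbabilityMeasure ρ] (hρ1 : Integrable id ρ)
    {f : ℝ → ℝ} {L : NNReal} (hf : LipschitzWith L f) : Integrable f ρ := by
  have hb : ∀ u : ℝ, ‖f u‖ ≤ |f 0| + (L : ℝ) * |u| := by
    intro u
    have h1 := hf.dist_le_mul u 0
    rw [Real.dist_eq, Real.dist_eq, sub_zero] at h1
    rw [Real.norm_eq_abs]
    have h2 : |f u| ≤ |f u - f 0| + |f 0| := by
      have := abs_add_le (f u - f 0) (f 0)
      simpa using this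
    linarith
  have hgint : Integrable (fun u : ℝ => |f 0| + (L : ℝ) * |u|) ρ :=
    (integrable_const _).add (hρ1.abs.const_mul _)
  exact hgint.mono' hf.continuous.aestronglyMeasurable (Filter.Eventually.of_forall hb)

lemma rsco_lip_int {ρ : Measure ℝ} [IsProbabilityMeasure ρ] (hρ1 : Integrable id ρ)
    {f : ℝ → ℝ} {L : NNReal} (hf : LipschitzWith L f) :
    (∀ u : ℝ, Integrable (fun y => f (u + y)) ρ) ∧
      LipschitzWith L (fun u => ∫ y, f (u + y) ∂ρ) := by
  have hint : ∀ u : ℝ, Integrable (fun y => f (u + y)) ρ := by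
    intro u
    have h2 : LipschitzWith (L * 1) (fun y => f (u + y)) := hf.comp (rsco_lip_translate u)
    rw [mul_one] at h2
    exact rsco_integrable_of_lip hρ1 h2
  refine ⟨hint, ?_⟩
  rw [lipschitzWith_iff_dist_le_mul]
  intro u1 u2
  rw [Real.dist_eq, Real.dist_eq, ← integral_sub (hint u1) (hint u2)]
  calc |∫ y, (f (u1 + y) - f (u2 + y)) ∂ρ|
      ≤ ∫ y, |f (u1 + y) - f (u2 + y)| ∂ρ := by
        simpa [Real.norm_eq_abs] using
          norm_integral_le_integral_norm (μ := ρ) (fun y => f (u1 + y) - f (u2 + y))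
    _ ≤ ∫ _, (L : ℝ) * |u1 - u2| ∂ρ := by
        refine integral_mono ((hint u1).sub (hint u2)).abs (integrable_const _) fun y => ?_
        have h3 := hf.dist_le_mul (u1 + y) (u2 + y)
        rw [Real.dist_eq, Real.dist_eq] at h3
        simpa [show u1 + y - (u2 + y) = u1 - u2 by ring] using h3
    _ = (L : ℝ) * |u1 - u2| := by simp [measure_univ]

lemma rsco_integrable_prod {α β : Measure ℝ} [IsProbabilityMeasure α] [IsProbabilityMeasure β]
    (hα1 : Integrable id α) (hβ1 : Integrable id β) {ψ : ℝ → ℝ} {L : NNReal}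
    (hL : LipschitzWith L ψ) (c : ℝ) :
    Integrable (fun p : ℝ × ℝ => ψ (c + p.1 + p.2)) (α.prod β) := by
  have hfst : Integrable (fun p : ℝ × ℝ => |p.1|) (α.prod β) := by
    have hmap : Measure.map Prod.fst (α.prod β) = α := by
      rw [Measure.map_fst_prod, measure_univ, one_smul]
    have h1 : Integrable (fun x : ℝ => |x|) (Measure.map Prod.fst (α.prod β)) := by
      rw [hmap]; exact hα1.abs
    exact (integrable_map_measure (measurable_abs.aestronglyMeasurable)
      measurable_fst.aemeasurable).1 h1
  have hsnd : Integrable (fun p : ℝ × ℝ => |p.2|) (α.prod β) := by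
    have hmap : Measure.map Prod.snd (α.prod β) = β := by
      rw [Measure.map_snd_prod, measure_univ, one_smul]
    have h1 : Integrable (fun x : ℝ => |x|) (Measure.map Prod.snd (α.prod β)) := by
      rw [hmap]; exact hβ1.abs
    exact (integrable_map_measure (measurable_abs.aestronglyMeasurable)
      measurable_snd.aemeasurable).1 h1
  have hgint : Integrable (fun p : ℝ × ℝ => (|ψ 0| + (L : ℝ) * |c|) +
      ((L : ℝ) * |p.1| + (L : ℝ) * |p.2|)) (α.prod β) :=
    (integrable_const _).add ((hfst.const_mul _).add (hsnd.const_mul _))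
  refine hgint.mono' ?_ (Filter.Eventually.of_forall fun p => ?_)
  · exact (hL.continuous.comp ((continuous_const.add continuous_fst).add
      continuous_snd)).aestronglyMeasurable
  · have h1 := hL.dist_le_mul (c + p.1 + p.2) 0
    rw [Real.dist_eq, Real.dist_eq, sub_zero] at h1
    have h2 : |ψ (c + p.1 + p.2)| ≤ |ψ (c + p.1 + p.2) - ψ 0| + |ψ 0| := by
      have := abs_add_le (ψ (c + p.1 + p.2) - ψ 0) (ψ 0); simpa using this
    have h3 : |c + p.1 + p.2| ≤ |c| + |p.1| + |p.2| := by
      calc |c + p.1 + p.2| ≤ |c + p.1| + |p.2| := abs_add_le _ _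
        _ ≤ |c| + |p.1| + |p.2| := by have := abs_add_le c p.1; linarith
    have h4 : (L : ℝ) * |c + p.1 + p.2| ≤ (L : ℝ) * (|c| + |p.1| + |p.2|) :=
      mul_le_mul_of_nonneg_left h3 L.coe_nonneg
    rw [Real.norm_eq_abs]
    nlinarith

lemma rsco_exchange {μ ν : Measure ℝ} [IsProbabilityMeasure μ] [IsProbabilityMeasure ν]
    (hμ1 : Integrable id μ) (hν1 : Integrable id ν)
    (h : ∀ t, μ (Set.Ioi t) ≤ ν (Set.Ioi t))
    {ψ : ℝ → ℝ} (hψ : ConvexOn ℝ Set.univ ψ) {L : NNReal} (hL : LipschitzWith L ψ) (c : ℝ) :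
    (∫ x, ∫ y, ψ (c + x + y) ∂ν ∂μ) + (∫ x, ∫ y, ψ (c + x + y) ∂μ ∂ν) ≤
      (∫ x, ∫ y, ψ (c + x + y) ∂μ ∂μ) + (∫ x, ∫ y, ψ (c + x + y) ∂ν ∂ν) := by
  have hGν := rsco_lip_int hν1 hL
  have hGμ := rsco_lip_int hμ1 hL
  set A : ℝ → ℝ := fun w => ∫ y, ψ (c + w + y) ∂ν with hA
  set B : ℝ → ℝ := fun w => ∫ y, ψ (c + w + y) ∂μ with hB
  have hAlip : LipschitzWith L A := by
    have h2 : LipschitzWith (L * 1) ((fun u => ∫ y, ψ (u + y) ∂ν) ∘ (fun w : ℝ => c + w)) :=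
      hGν.2.comp (rsco_lip_translate c)
    rw [mul_one] at h2
    exact h2
  have hBlip : LipschitzWith L B := by
    have h2 : LipschitzWith (L * 1) ((fun u => ∫ y, ψ (u + y) ∂μ) ∘ (fun w : ℝ => c + w)) :=
      hGμ.2.comp (rsco_lip_translate c)
    rw [mul_one] at h2
    exact h2
  have hAμ : Integrable A μ := rsco_integrable_of_lip hμ1 hAlip
  have hAν : Integrable A ν := rsco_integrable_of_lip hν1 hAlip
  have hBμ : Integrable B μ := rsco_integrable_of_lip hμ1 hBlip
  have hBν : Integrable B ν := rsco_integrable_of_lip hν1 hBlip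
  have hintμ : ∀ w : ℝ, Integrable (fun y => ψ (c + w + y)) μ := fun w => hGμ.1 (c + w)
  have hintν : ∀ w : ℝ, Integrable (fun y => ψ (c + w + y)) ν := fun w => hGν.1 (c + w)
  have hmono : Monotone (fun w => A w - B w) := by
    intro w1 w2 h12
    simp only [hA, hB]
    have hgm : Monotone (fun y => ψ (c + w2 + y) - ψ (c + w1 + y)) := rsco_diff_mono hψ h12 c
    have hkey := rsco_integral_mono_stoch h hgm ((hintμ w2).sub (hintμ w1))
      ((hintν w2).sub (hintν w1))
    rw [integral_sub (hintμ w2) (hintμ w1), integral_sub (hintν w2) (hintν w1)] at hkey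
    linarith
  have hM := rsco_integral_mono_stoch h hmono (hAμ.sub hBμ) (hAν.sub hBν)
  rw [integral_sub hAμ hBμ, integral_sub hAν hBν] at hM
  show (∫ x, A x ∂μ) + (∫ x, B x ∂ν) ≤ (∫ x, B x ∂μ) + (∫ x, A x ∂ν)
  linarith

lemma rsco_triple_exchange (γ μ ν : Measure ℝ) [IsProbabilityMeasure γ] [IsProbabilityMeasure μ]
    [IsProbabilityMeasure ν] (hγ1 : Integrable id γ) (hμ1 : Integrable id μ)
    (hν1 : Integrable id ν) (h : ∀ t, μ (Set.Ioi t) ≤ ν (Set.Ioi t))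
    {ψ : ℝ → ℝ} (hψ : ConvexOn ℝ Set.univ ψ) {L : NNReal} (hL : LipschitzWith L ψ) :
    2 * (∫ c, ∫ x, ∫ y, ψ (c + x + y) ∂ν ∂μ ∂γ) ≤
      (∫ c, ∫ x, ∫ y, ψ (c + x + y) ∂μ ∂μ ∂γ) +
        (∫ c, ∫ x, ∫ y, ψ (c + x + y) ∂ν ∂ν ∂γ) := by
  have hGν := rsco_lip_int hν1 hL
  have hGμ := rsco_lip_int hμ1 hL
  have hFμν : LipschitzWith L (fun c => ∫ x, ∫ y, ψ (c + x + y) ∂ν ∂μ) :=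
    (rsco_lip_int hμ1 hGν.2).2
  have hFμμ : LipschitzWith L (fun c => ∫ x, ∫ y, ψ (c + x + y) ∂μ ∂μ) :=
    (rsco_lip_int hμ1 hGμ.2).2
  have hFνν : LipschitzWith L (fun c => ∫ x, ∫ y, ψ (c + x + y) ∂ν ∂ν) :=
    (rsco_lip_int hν1 hGν.2).2
  have hpt : ∀ c : ℝ, 2 * (∫ x, ∫ y, ψ (c + x + y) ∂ν ∂μ) ≤
      (∫ x, ∫ y, ψ (c + x + y) ∂μ ∂μ) + (∫ x, ∫ y, ψ (c + x + y) ∂ν ∂ν) := by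
    intro c
    have hex := rsco_exchange hμ1 hν1 h hψ hL c
    have hswap : (∫ x, ∫ y, ψ (c + x + y) ∂μ ∂ν) = (∫ x, ∫ y, ψ (c + x + y) ∂ν ∂μ) := by
      have hint := rsco_integrable_prod hμ1 hν1 hL c
      have hsw := integral_integral_swap (f := fun x y => ψ (c + x + y)) (μ := μ) (ν := ν) hint
      calc (∫ x, ∫ y, ψ (c + x + y) ∂μ ∂ν)
          = ∫ y, ∫ x, ψ (c + x + y) ∂μ ∂ν := by
            refine integral_congr_ae (Filter.Eventually.of_forall fun a => ?_)
            refine integral_congr_ae (Filter.Eventually.of_forall fun b => ?_)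
            exact congrArg ψ (by ring)
        _ = ∫ x, ∫ y, ψ (c + x + y) ∂ν ∂μ := hsw.symm
    linarith
  have hiμν : Integrable (fun c => ∫ x, ∫ y, ψ (c + x + y) ∂ν ∂μ) γ :=
    rsco_integrable_of_lip hγ1 hFμν
  have hiμμ : Integrable (fun c => ∫ x, ∫ y, ψ (c + x + y) ∂μ ∂μ) γ :=
    rsco_integrable_of_lip hγ1 hFμμ
  have hiνν : Integrable (fun c => ∫ x, ∫ y, ψ (c + x + y) ∂ν ∂ν) γ :=
    rsco_integrable_of_lip hγ1 hFνν
  calc 2 * (∫ c, ∫ x, ∫ y, ψ (c + x + y) ∂ν ∂μ ∂γ)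
      = ∫ c, 2 * (∫ x, ∫ y, ψ (c + x + y) ∂ν ∂μ) ∂γ := (integral_const_mul 2 _).symm
    _ ≤ ∫ c, ((∫ x, ∫ y, ψ (c + x + y) ∂μ ∂μ) + (∫ x, ∫ y, ψ (c + x + y) ∂ν ∂ν)) ∂γ :=
        integral_mono (hiμν.const_mul 2) (hiμμ.add hiνν) hpt
    _ = _ := integral_add hiμμ hiνν

end Exchange
section Jensen

lemma rsco_slope_mono {m : ℕ} {f : ℕ → ℝ}
    (hmid : ∀ n, n + 2 ≤ m → 2 * f (n + 1) ≤ f n + f (n + 2)) :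
    ∀ i j, i ≤ j → j + 1 ≤ m → f (i + 1) - f i ≤ f (j + 1) - f j := by
  intro i j hij
  induction j, hij using Nat.le_induction with
  | base => intro _; exact le_refl _
  | succ j hij ih =>
    intro hj1
    have h1 := ih (by omega)
    have h2 := hmid j (by omega)
    linarith

lemma rsco_jensen {m k : ℕ} (hk : k ≤ m) (f : ℕ → ℝ) (p : ℕ → ℝ) (hp : ∀ n, 0 ≤ p n)
    (hmid : ∀ n, n + 2 ≤ m → 2 * f (n + 1) ≤ f n + f (n + 2))
    (hsum : ∑ n ∈ Finset.range (m + 1), p n = 1)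
    (hmean : ∑ n ∈ Finset.range (m + 1), (n : ℝ) * p n = (k : ℝ)) :
    f k ≤ ∑ n ∈ Finset.range (m + 1), p n * f n := by
  rcases eq_or_lt_of_le hk with rfl | hkm
  · -- k = m
    have hsum0 : ∑ n ∈ Finset.range (k + 1), ((k : ℝ) - n) * p n = 0 := by
      simp_rw [sub_mul]
      rw [Finset.sum_sub_distrib, ← Finset.mul_sum, hsum, hmean]
      ring
    have hzero : ∀ n ∈ Finset.range (k + 1), n ≠ k → p n = 0 := by
      intro n hn hnk
      have hnonneg : ∀ n ∈ Finset.range (k + 1), 0 ≤ ((k : ℝ) - n) * p n := by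
        intro n hn
        have : (n : ℝ) ≤ k := by
          have := Finset.mem_range_succ_iff.1 hn
          exact_mod_cast this
        exact mul_nonneg (by linarith) (hp n)
      have := (Finset.sum_eq_zero_iff_of_nonneg hnonneg).1 hsum0 n hn
      have hlt : (n : ℝ) < k := by
        have h1 := Finset.mem_range_succ_iff.1 hn
        have : n < k := lt_of_le_of_ne h1 hnk
        exact_mod_cast this
      have hfac : (k : ℝ) - n ≠ 0 := by linarith
      exact (mul_eq_zero.1 this).resolve_left hfac
    have hpk : p k = 1 := by
      rw [Finset.sum_eq_single k (fun n hn hnk => hzero n hn hnk)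
        (fun h => absurd (Finset.self_mem_range_succ k) h)] at hsum
      exact hsum
    rw [Finset.sum_eq_single k (fun n hn hnk => by rw [hzero n hn hnk, zero_mul])
      (fun h => absurd (Finset.self_mem_range_succ k) h), hpk, one_mul]
  · -- k < m
    set d := f (k + 1) - f k with hd
    have up : ∀ n, k ≤ n → n ≤ m → f k + d * ((n : ℝ) - k) ≤ f n := by
      intro n hkn
      induction n, hkn using Nat.le_induction with
      | base => intro _; simp
      | succ n hkn ih =>
        intro hnm
        have h1 := ih (by omega)
        have h2 := rsco_slope_mono hmid k n hkn (by omega)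
        push_cast
        have harith : ((n : ℝ) + 1 - k) = ((n : ℝ) - k) + 1 := by ring
        rw [harith]
        push_cast at h1
        linarith
    have down : ∀ i, i ≤ k → f k + d * (((k - i : ℕ) : ℝ) - k) ≤ f (k - i) := by
      intro i
      induction i with
      | zero => intro _; simp
      | succ i ih =>
        intro hik
        have h1 := ih (by omega)
        have hki : k - (i + 1) + 1 = k - i := by omega
        have h2 := rsco_slope_mono hmid (k - (i + 1)) k (by omega) (by omega)
        rw [hki] at h2
        have hc1 : ((k - i : ℕ) : ℝ) = (k : ℝ) - i := by
          rw [Nat.cast_sub (by omega : i ≤ k)]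
        have hc2 : ((k - (i + 1) : ℕ) : ℝ) = (k : ℝ) - (i + 1) := by
          rw [Nat.cast_sub (by omega : i + 1 ≤ k)]
          push_cast
          ring
        rw [hc2]
        rw [hc1] at h1
        push_cast at h1 ⊢
        linarith
    have hsupport : ∀ n, n ≤ m → f k + d * ((n : ℝ) - k) ≤ f n := by
      intro n hn
      rcases le_or_gt k n with h | h
      · exact up n h hn
      · have := down (k - n) (by omega)
        rw [show k - (k - n) = n from by omega] at this
        exact this
    have hterm : ∀ n ∈ Finset.range (m + 1), p n * (f k + d * ((n : ℝ) - k)) ≤ p n * f n :=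
      fun n hn =>
        mul_le_mul_of_nonneg_left (hsupport n (Finset.mem_range_succ_iff.1 hn)) (hp n)
    have hsum2 : ∑ n ∈ Finset.range (m + 1), p n * (f k + d * ((n : ℝ) - k)) = f k := by
      have expand : ∀ n : ℕ, p n * (f k + d * ((n : ℝ) - k)) =
          (f k * p n + d * ((n : ℝ) * p n)) - d * (k : ℝ) * p n := by intro n; ring
      rw [Finset.sum_congr rfl (fun n _ => expand n), Finset.sum_sub_distrib,
        Finset.sum_add_distrib, ← Finset.mul_sum, ← Finset.mul_sum, ← Finset.mul_sum,
        hsum, hmean]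
      ring
    calc f k = ∑ n ∈ Finset.range (m + 1), p n * (f k + d * ((n : ℝ) - k)) := hsum2.symm
      _ ≤ ∑ n ∈ Finset.range (m + 1), p n * f n := Finset.sum_le_sum hterm

end Jensen
section OmegaAux

/-- Projection of a mixed coordinate to `ℝ` (junk value `0` on the `ℕ` coordinate). -/
def rscoProj : (i : Option (ℕ ⊕ ℕ)) → mixCodomain i → ℝ
  | none => fun _ => 0
  | some _ => fun x => x

lemma rscoProj_measurable : ∀ i, Measurable (rscoProj i)
  | none => measurable_const
  | some _ => measurable_id

/-- The index finset of a sum `∑_{j ∈ s1} ξ_j + ∑_{j ∈ s2} η_j`. -/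
def rscoT (s1 s2 : Finset ℕ) : Finset (Option (ℕ ⊕ ℕ)) :=
  s1.image (fun j => (some (Sum.inl j) : Option (ℕ ⊕ ℕ))) ∪
    s2.image (fun j => (some (Sum.inr j) : Option (ℕ ⊕ ℕ)))

/-- The real-valued members of the mixed family. -/
def mixR {Ω : Type*} (ξ η : ℕ → Ω → ℝ) (K : Ω → ℕ) (i : ℕ ⊕ ℕ) : Ω → ℝ :=
  mixFam ξ η K (some i)

variable {Ω : Type*} [MeasurableSpace Ω] {P : Measure Ω} [IsProbabilityMeasure P]
  {ξ η : ℕ → Ω → ℝ} {K : Ω → ℕ}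

lemma rsco_mixFam_measurable (hξm : ∀ j, Measurable (ξ j)) (hηm : ∀ j, Measurable (η j))
    (hKm : Measurable K) : ∀ i, Measurable (mixFam ξ η K i)
  | none => hKm
  | some (.inl j) => hξm j
  | some (.inr j) => hηm j

lemma rsco_sum_eq (s1 s2 : Finset ℕ) (ω : Ω) :
    (∑ i ∈ (rscoT s1 s2).attach, rscoProj i.1 (mixFam ξ η K i.1 ω)) =
      ∑ j ∈ s1, ξ j ω + ∑ j ∈ s2, η j ω := by
  classical
  rw [Finset.sum_attach (rscoT s1 s2) (fun i => rscoProj i (mixFam ξ η K i ω))]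
  unfold rscoT
  rw [Finset.sum_union]
  · congr 1
    · rw [Finset.sum_image (by intro a _ b _ h; simpa using h)]
      rfl
    · rw [Finset.sum_image (by intro a _ b _ h; simpa using h)]
      rfl
  · rw [Finset.disjoint_left]
    rintro a ha hb
    simp only [Finset.mem_image] at ha hb
    obtain ⟨x, _, rfl⟩ := ha
    obtain ⟨y, _, h⟩ := hb
    simp at h

/-- The function computing the sum from the tuple of coordinates in `rscoT s1 s2`. -/
noncomputable def rscoF (s1 s2 : Finset ℕ) :
    (∀ i : (rscoT s1 s2 : Finset (Option (ℕ ⊕ ℕ))), mixCodomain i.1) → ℝ :=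
  fun v => ∑ i ∈ (rscoT s1 s2).attach, rscoProj i.1 (v i)

lemma rscoF_measurable (s1 s2 : Finset ℕ) : Measurable (rscoF s1 s2) :=
  Finset.measurable_sum _ fun i _ => (rscoProj_measurable i.1).comp (measurable_pi_apply i)

lemma rsco_indepK (hξm : ∀ j, Measurable (ξ j)) (hηm : ∀ j, Measurable (η j))
    (hKm : Measurable K)
    (hindep : iIndepFun (mixFam ξ η K) P) (s1 s2 : Finset ℕ) :
    IndepFun K (fun ω => ∑ j ∈ s1, ξ j ω + ∑ j ∈ s2, η j ω) P := by
  classical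
  have hfm := rsco_mixFam_measurable hξm hηm hKm
  have hdisj : Disjoint ({none} : Finset (Option (ℕ ⊕ ℕ))) (rscoT s1 s2) := by
    rw [Finset.disjoint_left]
    rintro a ha hb
    simp only [Finset.mem_singleton] at ha
    subst ha
    unfold rscoT at hb
    simp at hb
  have h1 := hindep.indepFun_finset {none} (rscoT s1 s2) hdisj hfm
  have hGm : Measurable (fun v : (∀ i : ({none} : Finset (Option (ℕ ⊕ ℕ))), mixCodomain i.1) =>
      v ⟨none, Finset.mem_singleton_self none⟩) := measurable_pi_apply _
  have h2 := h1.comp hGm (rscoF_measurable s1 s2)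
  have he : (fun a => rscoF s1 s2 (fun i : (rscoT s1 s2 : Finset (Option (ℕ ⊕ ℕ))) =>
      mixFam ξ η K i.1 a)) = fun ω => ∑ j ∈ s1, ξ j ω + ∑ j ∈ s2, η j ω :=
    funext fun ω => rsco_sum_eq s1 s2 ω
  rw [← he]
  exact h2

lemma rsco_triple_map (hξm : ∀ j, Measurable (ξ j)) (hηm : ∀ j, Measurable (η j))
    (hKm : Measurable K)
    (hindep : iIndepFun (mixFam ξ η K) P)
    (s1 s2 : Finset ℕ) (i1 i2 : ℕ ⊕ ℕ)
    (h1T : (some i1 : Option (ℕ ⊕ ℕ)) ∉ rscoT s1 s2)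
    (h2T : (some i2 : Option (ℕ ⊕ ℕ)) ∉ rscoT s1 s2) (h12 : i1 ≠ i2) :
    Measure.map (fun ω => ((∑ j ∈ s1, ξ j ω + ∑ j ∈ s2, η j ω),
        (mixR ξ η K i1 ω, mixR ξ η K i2 ω))) P =
      (Measure.map (fun ω => ∑ j ∈ s1, ξ j ω + ∑ j ∈ s2, η j ω) P).prod
        ((Measure.map (mixR ξ η K i1) P).prod (Measure.map (mixR ξ η K i2) P)) := by
  classical
  have hfm := rsco_mixFam_measurable hξm hηm hKm
  have hCm : Measurable (fun ω => ∑ j ∈ s1, ξ j ω + ∑ j ∈ s2, η j ω) :=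
    (Finset.measurable_sum _ fun j _ => hξm j).add (Finset.measurable_sum _ fun j _ => hηm j)
  have hVm : Measurable (mixR ξ η K i1) := hfm (some i1)
  have hWm : Measurable (mixR ξ η K i2) := hfm (some i2)
  have hpair : IndepFun (mixR ξ η K i1) (mixR ξ η K i2) P :=
    hindep.indepFun (show (some i1 : Option (ℕ ⊕ ℕ)) ≠ some i2 by simpa using h12)
  have hdisj : Disjoint (rscoT s1 s2) ({some i1, some i2} : Finset (Option (ℕ ⊕ ℕ))) := by
    rw [Finset.disjoint_right]
    intro a ha
    simp only [Finset.mem_insert, Finset.mem_singleton] at ha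
    rcases ha with rfl | rfl
    · exact h1T
    · exact h2T
  have h1 := hindep.indepFun_finset (rscoT s1 s2) {some i1, some i2} hdisj hfm
  have hmem1 : (some i1 : Option (ℕ ⊕ ℕ)) ∈ ({some i1, some i2} : Finset (Option (ℕ ⊕ ℕ))) := by
    simp
  have hmem2 : (some i2 : Option (ℕ ⊕ ℕ)) ∈ ({some i1, some i2} : Finset (Option (ℕ ⊕ ℕ))) := by
    simp
  have hG2m : Measurable (fun v : (∀ i : ({some i1, some i2} : Finset (Option (ℕ ⊕ ℕ))),
      mixCodomain i.1) => ((v ⟨some i1, hmem1⟩ : ℝ), (v ⟨some i2, hmem2⟩ : ℝ))) :=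
    Measurable.prodMk (measurable_pi_apply _) (measurable_pi_apply _)
  have h2 := h1.comp (rscoF_measurable s1 s2) hG2m
  have he : (fun a => rscoF s1 s2 (fun i : (rscoT s1 s2 : Finset (Option (ℕ ⊕ ℕ))) =>
      mixFam ξ η K i.1 a)) = fun ω => ∑ j ∈ s1, ξ j ω + ∑ j ∈ s2, η j ω :=
    funext fun ω => rsco_sum_eq s1 s2 ω
  have hCpair : IndepFun (fun ω => ∑ j ∈ s1, ξ j ω + ∑ j ∈ s2, η j ω)
      (fun ω => (mixR ξ η K i1 ω, mixR ξ η K i2 ω)) P := by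
    rw [← he]
    exact h2
  have h3 := (indepFun_iff_map_prod_eq_prod_map_map hCm.aemeasurable
    ((hVm.prodMk hWm).aemeasurable)).1 hCpair
  have h4 := (indepFun_iff_map_prod_eq_prod_map_map hVm.aemeasurable hWm.aemeasurable).1 hpair
  rw [h3, h4]

end OmegaAux
section MoreAux

lemma rsco_int_abs_fst {α β : Measure ℝ} [IsProbabilityMeasure α] [IsProbabilityMeasure β]
    (hα1 : Integrable id α) : Integrable (fun p : ℝ × ℝ => |p.1|) (α.prod β) := by
  have hmap : Measure.map Prod.fst (α.prod β) = α := by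
    rw [Measure.map_fst_prod, measure_univ, one_smul]
  have h1 : Integrable (fun x : ℝ => |x|) (Measure.map Prod.fst (α.prod β)) := by
    rw [hmap]; exact hα1.abs
  exact (integrable_map_measure (measurable_abs.aestronglyMeasurable)
    measurable_fst.aemeasurable).1 h1

lemma rsco_int_abs_snd {α β : Measure ℝ} [IsProbabilityMeasure α] [IsProbabilityMeasure β]
    (hβ1 : Integrable id β) : Integrable (fun p : ℝ × ℝ => |p.2|) (α.prod β) := by
  have hmap : Measure.map Prod.snd (α.prod β) = β := by
    rw [Measure.map_snd_prod, measure_univ, one_smul]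
  have h1 : Integrable (fun x : ℝ => |x|) (Measure.map Prod.snd (α.prod β)) := by
    rw [hmap]; exact hβ1.abs
  exact (integrable_map_measure (measurable_abs.aestronglyMeasurable)
    measurable_snd.aemeasurable).1 h1

lemma rsco_integrable_prod3 {γ α β : Measure ℝ} [IsProbabilityMeasure γ] [IsProbabilityMeasure α]
    [IsProbabilityMeasure β] (hγ1 : Integrable id γ) (hα1 : Integrable id α)
    (hβ1 : Integrable id β) {ψ : ℝ → ℝ} {L : NNReal} (hL : LipschitzWith L ψ) :
    Integrable (fun p : ℝ × ℝ × ℝ => ψ (p.1 + p.2.1 + p.2.2)) (γ.prod (α.prod β)) := by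
  have h1 : Integrable (fun p : ℝ × ℝ × ℝ => |p.1|) (γ.prod (α.prod β)) := by
    have hmap : Measure.map Prod.fst (γ.prod (α.prod β)) = γ := by
      rw [Measure.map_fst_prod, measure_univ, one_smul]
    have h0 : Integrable (fun x : ℝ => |x|) (Measure.map Prod.fst (γ.prod (α.prod β))) := by
      rw [hmap]; exact hγ1.abs
    exact (integrable_map_measure (measurable_abs.aestronglyMeasurable)
      measurable_fst.aemeasurable).1 h0
  have hmap2 : Measure.map Prod.snd (γ.prod (α.prod β)) = α.prod β := by
    rw [Measure.map_snd_prod, measure_univ, one_smul]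
  have h2 : Integrable (fun p : ℝ × ℝ × ℝ => |p.2.1|) (γ.prod (α.prod β)) := by
    have h0 : Integrable (fun q : ℝ × ℝ => |q.1|) (Measure.map Prod.snd (γ.prod (α.prod β))) := by
      rw [hmap2]; exact rsco_int_abs_fst hα1
    exact (integrable_map_measure ((measurable_abs.comp measurable_fst).aestronglyMeasurable)
      measurable_snd.aemeasurable).1 h0
  have h3 : Integrable (fun p : ℝ × ℝ × ℝ => |p.2.2|) (γ.prod (α.prod β)) := by
    have h0 : Integrable (fun q : ℝ × ℝ => |q.2|) (Measure.map Prod.snd (γ.prod (α.prod β))) := by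
      rw [hmap2]; exact rsco_int_abs_snd hβ1
    exact (integrable_map_measure ((measurable_abs.comp measurable_snd).aestronglyMeasurable)
      measurable_snd.aemeasurable).1 h0
  have hgint : Integrable (fun p : ℝ × ℝ × ℝ => |ψ 0| +
      ((L : ℝ) * |p.1| + ((L : ℝ) * |p.2.1| + (L : ℝ) * |p.2.2|))) (γ.prod (α.prod β)) :=
    (integrable_const _).add ((h1.const_mul _).add ((h2.const_mul _).add (h3.const_mul _)))
  refine hgint.mono' ?_ (Filter.Eventually.of_forall fun p => ?_)
  · exact (hL.continuous.comp (((continuous_fst).add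
      (continuous_fst.comp continuous_snd)).add
      (continuous_snd.comp continuous_snd))).aestronglyMeasurable
  · have hd := hL.dist_le_mul (p.1 + p.2.1 + p.2.2) 0
    rw [Real.dist_eq, Real.dist_eq, sub_zero] at hd
    have habs : |ψ (p.1 + p.2.1 + p.2.2)| ≤ |ψ (p.1 + p.2.1 + p.2.2) - ψ 0| + |ψ 0| := by
      have := abs_add_le (ψ (p.1 + p.2.1 + p.2.2) - ψ 0) (ψ 0); simpa using this
    have htri : |p.1 + p.2.1 + p.2.2| ≤ |p.1| + |p.2.1| + |p.2.2| := by
      calc |p.1 + p.2.1 + p.2.2| ≤ |p.1 + p.2.1| + |p.2.2| := abs_add_le _ _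
        _ ≤ |p.1| + |p.2.1| + |p.2.2| := by have := abs_add_le p.1 p.2.1; linarith
    have h4 : (L : ℝ) * |p.1 + p.2.1 + p.2.2| ≤ (L : ℝ) * (|p.1| + |p.2.1| + |p.2.2|) :=
      mul_le_mul_of_nonneg_left htri L.coe_nonneg
    rw [Real.norm_eq_abs]
    nlinarith

lemma rsco_prod3_iterated {γ α β : Measure ℝ} [IsProbabilityMeasure γ] [IsProbabilityMeasure α]
    [IsProbabilityMeasure β] (hγ1 : Integrable id γ) (hα1 : Integrable id α)
    (hβ1 : Integrable id β) {ψ : ℝ → ℝ} {L : NNReal} (hL : LipschitzWith L ψ) :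
    ∫ p : ℝ × ℝ × ℝ, ψ (p.1 + p.2.1 + p.2.2) ∂(γ.prod (α.prod β)) =
      ∫ c, ∫ x, ∫ y, ψ (c + x + y) ∂β ∂α ∂γ := by
  rw [integral_prod _ (rsco_integrable_prod3 hγ1 hα1 hβ1 hL)]
  refine integral_congr_ae (Filter.Eventually.of_forall fun c => ?_)
  simp only
  rw [integral_prod _ (rsco_integrable_prod hα1 hβ1 hL c)]

lemma rsco_integrable_comp_lip {Ω : Type*} [MeasurableSpace Ω] {ρ : Measure Ω}
    [IsProbabilityMeasure ρ] {f : Ω → ℝ} (hf : Integrable f ρ) {g : ℝ → ℝ} {L : NNReal}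
    (hg : LipschitzWith L g) : Integrable (fun ω => g (f ω)) ρ := by
  have hb : ∀ ω, ‖g (f ω)‖ ≤ |g 0| + (L : ℝ) * |f ω| := by
    intro ω
    have h1 := hg.dist_le_mul (f ω) 0
    rw [Real.dist_eq, Real.dist_eq, sub_zero] at h1
    rw [Real.norm_eq_abs]
    have h2 : |g (f ω)| ≤ |g (f ω) - g 0| + |g 0| := by
      have := abs_add_le (g (f ω) - g 0) (g 0); simpa using this
    linarith
  exact ((integrable_const _).add (hf.abs.const_mul _)).mono'
    (hg.continuous.comp_aestronglyMeasurable hf.1) (Filter.Eventually.of_forall hb)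

lemma rsco_lintegral_ofReal_ne_top {Ω : Type*} [MeasurableSpace Ω] {ρ : Measure Ω} {f : Ω → ℝ}
    (hf : Integrable f ρ) : ∫⁻ ω, ENNReal.ofReal (f ω) ∂ρ ≠ ⊤ := by
  refine ne_of_lt (lt_of_le_of_lt ?_ hf.hasFiniteIntegral)
  apply lintegral_mono
  intro a
  simp only
  rw [Real.enorm_eq_ofReal_abs]
  exact ENNReal.ofReal_le_ofReal (le_abs_self _)

lemma rsco_iSup_ofReal {ψ : ℝ → ℝ} {Ψ : ℕ → ℝ → ℝ} (hm : ∀ x, Monotone fun N => Ψ N x)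
    (hle : ∀ N x, Ψ N x ≤ ψ x) (hdense : ∀ (x : ℝ) (ε : ℝ), 0 < ε → ∃ N, ψ x - ε < Ψ N x)
    (x : ℝ) : ⨆ N, ENNReal.ofReal (Ψ N x) = ENNReal.ofReal (ψ x) := by
  apply le_antisymm
  · exact iSup_le fun N => ENNReal.ofReal_le_ofReal (hle N x)
  · refine ENNReal.le_of_forall_pos_le_add fun ε hε _ => ?_
    obtain ⟨N, hN⟩ := hdense x ε (by exact_mod_cast hε)
    calc ENNReal.ofReal (ψ x) ≤ ENNReal.ofReal (Ψ N x + ε) :=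
          ENNReal.ofReal_le_ofReal (by linarith)
      _ ≤ ENNReal.ofReal (Ψ N x) + ENNReal.ofReal (ε : ℝ) := ENNReal.ofReal_add_le
      _ ≤ (⨆ N, ENNReal.ofReal (Ψ N x)) + ε := by
          refine add_le_add (le_iSup (fun N => ENNReal.ofReal (Ψ N x)) N) ?_
          rw [ENNReal.ofReal_coe_nnreal]

end MoreAux
section JTriple

variable {Ω : Type*} [MeasurableSpace Ω] {P : Measure Ω} [IsProbabilityMeasure P]
  {ξ η : ℕ → Ω → ℝ} {K : Ω → ℕ}

lemma rsco_J_triple (hξm : ∀ j, Measurable (ξ j)) (hηm : ∀ j, Measurable (η j))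
    (hKm : Measurable K)
    (hindep : iIndepFun (mixFam ξ η K) P)
    (s1 s2 : Finset ℕ) (hξint : ∀ j, Integrable (ξ j) P) (hηint : ∀ j, Integrable (η j) P)
    (i1 i2 : ℕ ⊕ ℕ) (h1T : (some i1 : Option (ℕ ⊕ ℕ)) ∉ rscoT s1 s2)
    (h2T : (some i2 : Option (ℕ ⊕ ℕ)) ∉ rscoT s1 s2) (h12 : i1 ≠ i2)
    {ψ' : ℝ → ℝ} {L : NNReal} (hL : LipschitzWith L ψ')
    (hV1 : Integrable id (Measure.map (mixR ξ η K i1) P))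
    (hW1 : Integrable id (Measure.map (mixR ξ η K i2) P)) :
    ∫ ω, ψ' ((∑ j ∈ s1, ξ j ω + ∑ j ∈ s2, η j ω) + mixR ξ η K i1 ω
        + mixR ξ η K i2 ω) ∂P =
      ∫ c, ∫ x, ∫ y, ψ' (c + x + y)
        ∂(Measure.map (mixR ξ η K i2) P) ∂(Measure.map (mixR ξ η K i1) P)
        ∂(Measure.map (fun ω => ∑ j ∈ s1, ξ j ω + ∑ j ∈ s2, η j ω) P) := by
  have hfm := rsco_mixFam_measurable hξm hηm hKm
  have hCm : Measurable (fun ω => ∑ j ∈ s1, ξ j ω + ∑ j ∈ s2, η j ω) :=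
    (Finset.measurable_sum _ fun j _ => hξm j).add (Finset.measurable_sum _ fun j _ => hηm j)
  have hCint : Integrable (fun ω => ∑ j ∈ s1, ξ j ω + ∑ j ∈ s2, η j ω) P :=
    (integrable_finset_sum _ fun j _ => hξint j).add (integrable_finset_sum _ fun j _ => hηint j)
  have hVm : Measurable (mixR ξ η K i1) := hfm (some i1)
  have hWm : Measurable (mixR ξ η K i2) := hfm (some i2)
  haveI : IsProbabilityMeasure (Measure.map (fun ω => ∑ j ∈ s1, ξ j ω + ∑ j ∈ s2, η j ω) P) :=
    Measure.isProbabilityMeasure_map hCm.aemeasurable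
  haveI : IsProbabilityMeasure (Measure.map (mixR ξ η K i1) P) :=
    Measure.isProbabilityMeasure_map hVm.aemeasurable
  haveI : IsProbabilityMeasure (Measure.map (mixR ξ η K i2) P) :=
    Measure.isProbabilityMeasure_map hWm.aemeasurable
  have hγ1 : Integrable id (Measure.map (fun ω => ∑ j ∈ s1, ξ j ω + ∑ j ∈ s2, η j ω) P) :=
    (integrable_map_measure aestronglyMeasurable_id hCm.aemeasurable).2 hCint
  have htriple : Measurable (fun ω => ((∑ j ∈ s1, ξ j ω + ∑ j ∈ s2, η j ω),
      (mixR ξ η K i1 ω, mixR ξ η K i2 ω))) :=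
    hCm.prodMk (hVm.prodMk hWm)
  have hmap := rsco_triple_map hξm hηm hKm hindep s1 s2 i1 i2 h1T h2T h12
  have hG_cont : Continuous (fun p : ℝ × ℝ × ℝ => ψ' (p.1 + p.2.1 + p.2.2)) :=
    hL.continuous.comp ((continuous_fst.add (continuous_fst.comp continuous_snd)).add
      (continuous_snd.comp continuous_snd))
  calc ∫ ω, ψ' ((∑ j ∈ s1, ξ j ω + ∑ j ∈ s2, η j ω) + mixR ξ η K i1 ω
        + mixR ξ η K i2 ω) ∂P
      = ∫ p : ℝ × ℝ × ℝ, ψ' (p.1 + p.2.1 + p.2.2)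
          ∂(Measure.map (fun ω => ((∑ j ∈ s1, ξ j ω + ∑ j ∈ s2, η j ω),
            (mixR ξ η K i1 ω, mixR ξ η K i2 ω))) P) :=
        (integral_map htriple.aemeasurable hG_cont.aestronglyMeasurable).symm
    _ = ∫ p : ℝ × ℝ × ℝ, ψ' (p.1 + p.2.1 + p.2.2)
          ∂((Measure.map (fun ω => ∑ j ∈ s1, ξ j ω + ∑ j ∈ s2, η j ω) P).prod
            ((Measure.map (mixR ξ η K i1) P).prod
              (Measure.map (mixR ξ η K i2) P))) := by rw [hmap]
    _ = _ := rsco_prod3_iterated hγ1 hV1 hW1 hL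

end JTriple
/-- Lemma 4.5: if `ξ ≤_st η`, the `ξ_j, η_j` are independent copies of
`ξ, η`, and `K` is independent of them, `0 ≤ K ≤ m`, with integer mean `E[K] = k`, then
`Σ_{j=1}^{k} ξ_j + Σ_{j=k+1}^{m} η_j ≤_cx Σ_{j=1}^{K} ξ_j + Σ_{j=K+1}^{m} η_j`. -/
theorem random_sum_convex_order
    {Ω : Type*} [MeasurableSpace Ω] (P : Measure Ω) [IsProbabilityMeasure P]
    (m k : ℕ) (ξ0 η0 : Ω → ℝ) (hξ0m : Measurable ξ0) (hη0m : Measurable η0)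
    (hξ0i : Integrable ξ0 P) (hη0i : Integrable η0 P)
    (hst : ∀ t : ℝ, P {ω | t < ξ0 ω} ≤ P {ω | t < η0 ω})
    (ξ η : ℕ → Ω → ℝ) (hξm : ∀ j, Measurable (ξ j)) (hηm : ∀ j, Measurable (η j))
    (hξcopy : ∀ j, Measure.map (ξ j) P = Measure.map ξ0 P)
    (hηcopy : ∀ j, Measure.map (η j) P = Measure.map η0 P)
    (K : Ω → ℕ) (hKm : Measurable K) (hKle : ∀ ω, K ω ≤ m)
    (hindep : iIndepFun (mixFam ξ η K) P)
    (hEK : ∫ ω, (K ω : ℝ) ∂P = (k : ℝ)) :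
    ∀ φ : ℝ → ℝ, ConvexOn ℝ Set.univ φ →
      Integrable (fun ω => φ (∑ j ∈ Finset.range k, ξ j ω + ∑ j ∈ Finset.Ico k m, η j ω)) P →
      Integrable (fun ω => φ (∑ j ∈ Finset.range (K ω), ξ j ω + ∑ j ∈ Finset.Ico (K ω) m, η j ω)) P →
      ∫ ω, φ (∑ j ∈ Finset.range k, ξ j ω + ∑ j ∈ Finset.Ico k m, η j ω) ∂P ≤
        ∫ ω, φ (∑ j ∈ Finset.range (K ω), ξ j ω + ∑ j ∈ Finset.Ico (K ω) m, η j ω) ∂P := by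
  classical
  intro φ hφ hintk hintK
  have hfm := rsco_mixFam_measurable hξm hηm hKm
  set Sf : ℕ → Ω → ℝ :=
    fun n ω => ∑ j ∈ Finset.range n, ξ j ω + ∑ j ∈ Finset.Ico n m, η j ω with hSfdef
  set μ : Measure ℝ := Measure.map ξ0 P with hμdef
  set ν : Measure ℝ := Measure.map η0 P with hνdef
  haveI : IsProbabilityMeasure μ := Measure.isProbabilityMeasure_map hξ0m.aemeasurable
  haveI : IsProbabilityMeasure ν := Measure.isProbabilityMeasure_map hη0m.aemeasurable
  have hμ1 : Integrable id μ :=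
    (integrable_map_measure aestronglyMeasurable_id hξ0m.aemeasurable).2 hξ0i
  have hν1 : Integrable id ν :=
    (integrable_map_measure aestronglyMeasurable_id hη0m.aemeasurable).2 hη0i
  have hstμν : ∀ t, μ (Set.Ioi t) ≤ ν (Set.Ioi t) := by
    intro t
    rw [hμdef, hνdef, Measure.map_apply hξ0m measurableSet_Ioi,
      Measure.map_apply hη0m measurableSet_Ioi]
    exact hst t
  have hξint : ∀ j, Integrable (ξ j) P := by
    intro j
    have h1 : Integrable id (Measure.map (ξ j) P) := by rw [hξcopy j]; exact hμ1
    exact (integrable_map_measure aestronglyMeasurable_id (hξm j).aemeasurable).1 h1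
  have hηint : ∀ j, Integrable (η j) P := by
    intro j
    have h1 : Integrable id (Measure.map (η j) P) := by rw [hηcopy j]; exact hν1
    exact (integrable_map_measure aestronglyMeasurable_id (hηm j).aemeasurable).1 h1
  have hSfm : ∀ n, Measurable (Sf n) := fun n =>
    (Finset.measurable_sum _ fun j _ => hξm j).add (Finset.measurable_sum _ fun j _ => hηm j)
  have hSfint : ∀ n, Integrable (Sf n) P := fun n =>
    (integrable_finset_sum _ fun j _ => hξint j).add (integrable_finset_sum _ fun j _ => hηint j)
  -- SK as a sum over range m
  have hSK_eq : ∀ ω, Sf (K ω) ω = ∑ j ∈ Finset.range m, (if j < K ω then ξ j ω else η j ω) := by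
    intro ω
    have h1 : Sf (K ω) ω = (∑ j ∈ Finset.range (K ω), (if j < K ω then ξ j ω else η j ω)) +
        ∑ j ∈ Finset.Ico (K ω) m, (if j < K ω then ξ j ω else η j ω) := by
      simp only [hSfdef]
      congr 1
      · exact Finset.sum_congr rfl fun j hj => (if_pos (Finset.mem_range.1 hj)).symm
      · refine Finset.sum_congr rfl fun j hj => ?_
        have := (Finset.mem_Ico.1 hj).1
        exact (if_neg (by omega)).symm
    rw [h1, ← Nat.Ico_zero_eq_range,
      Finset.sum_Ico_consecutive _ (Nat.zero_le (K ω)) (hKle ω), Nat.Ico_zero_eq_range]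
  have hite_int : ∀ j, Integrable (fun ω => if j < K ω then ξ j ω else η j ω) P := by
    intro j
    refine ((hξint j).abs.add (hηint j).abs).mono'
      ((Measurable.ite (hKm measurableSet_Ioi) (hξm j) (hηm j)).aestronglyMeasurable)
      (Filter.Eventually.of_forall fun ω => ?_)
    rw [Real.norm_eq_abs]
    simp only [Pi.add_apply]
    split_ifs
    · linarith [abs_nonneg (η j ω)]
    · linarith [abs_nonneg (ξ j ω)]
  have hSKm : Measurable (fun ω => Sf (K ω) ω) := by
    have heq : (fun ω => Sf (K ω) ω) =
        fun ω => ∑ j ∈ Finset.range m, (if j < K ω then ξ j ω else η j ω) := funext hSK_eq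
    rw [heq]
    exact Finset.measurable_sum _ fun j _ =>
      Measurable.ite (hKm measurableSet_Ioi) (hξm j) (hηm j)
  have hSKint : Integrable (fun ω => Sf (K ω) ω) P := by
    have heq : (fun ω => Sf (K ω) ω) =
        fun ω => ∑ j ∈ Finset.range m, (if j < K ω then ξ j ω else η j ω) := funext hSK_eq
    rw [heq]
    exact integrable_finset_sum _ fun j _ => hite_int j
  -- expectations
  have hEξj : ∀ j, ∫ ω, ξ j ω ∂P = ∫ ω, ξ0 ω ∂P := by
    intro j
    calc ∫ ω, ξ j ω ∂P = ∫ x, x ∂(Measure.map (ξ j) P) :=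
          (integral_map (hξm j).aemeasurable aestronglyMeasurable_id).symm
      _ = ∫ x, x ∂(Measure.map ξ0 P) := by rw [hξcopy j]
      _ = ∫ ω, ξ0 ω ∂P := integral_map hξ0m.aemeasurable aestronglyMeasurable_id
  have hEηj : ∀ j, ∫ ω, η j ω ∂P = ∫ ω, η0 ω ∂P := by
    intro j
    calc ∫ ω, η j ω ∂P = ∫ x, x ∂(Measure.map (η j) P) :=
          (integral_map (hηm j).aemeasurable aestronglyMeasurable_id).symm
      _ = ∫ x, x ∂(Measure.map η0 P) := by rw [hηcopy j]
      _ = ∫ ω, η0 ω ∂P := integral_map hη0m.aemeasurable aestronglyMeasurable_id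
  set Eξ : ℝ := ∫ ω, ξ0 ω ∂P with hEξdef
  set Eη : ℝ := ∫ ω, η0 ω ∂P with hEηdef
  -- indicator variables
  set χ : ℕ → Ω → ℝ := fun j ω => if j < K ω then (1 : ℝ) else 0 with hχdef
  have hKsetIoi : ∀ j, MeasurableSet {ω | j < K ω} := fun j => hKm measurableSet_Ioi
  have hχm : ∀ j, Measurable (χ j) := fun j =>
    Measurable.ite (hKm measurableSet_Ioi) measurable_const measurable_const
  have hχint : ∀ j, Integrable (χ j) P := by
    intro j
    refine (integrable_const (1 : ℝ)).mono' (hχm j).aestronglyMeasurable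
      (Filter.Eventually.of_forall fun ω => ?_)
    rw [Real.norm_eq_abs]
    simp only [hχdef]
    split_ifs <;> norm_num
  have hq : ∀ j, ∫ ω, χ j ω ∂P = (P {ω | j < K ω}).toReal := by
    intro j
    have hind : χ j = Set.indicator {ω | j < K ω} (fun _ => (1 : ℝ)) := by
      funext ω
      by_cases h : j < K ω <;> simp [hχdef, Set.indicator_apply, h]
    rw [hind, integral_indicator_const _ (hKsetIoi j)]
    simp [Measure.real]
  have hχK : ∀ ω, (∑ j ∈ Finset.range m, χ j ω) = (K ω : ℝ) := by
    intro ω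
    simp only [hχdef]
    rw [Finset.sum_boole]
    have hfilter : (Finset.range m).filter (fun j => j < K ω) = Finset.range (K ω) := by
      ext j
      simp only [Finset.mem_filter, Finset.mem_range]
      have := hKle ω
      omega
    rw [hfilter, Finset.card_range]
  have hqsum : ∑ j ∈ Finset.range m, (P {ω | j < K ω}).toReal = (k : ℝ) := by
    calc ∑ j ∈ Finset.range m, (P {ω | j < K ω}).toReal
        = ∑ j ∈ Finset.range m, ∫ ω, χ j ω ∂P :=
          Finset.sum_congr rfl fun j _ => (hq j).symm
      _ = ∫ ω, ∑ j ∈ Finset.range m, χ j ω ∂P :=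
          (integral_finset_sum _ fun j _ => hχint j).symm
      _ = ∫ ω, (K ω : ℝ) ∂P := integral_congr_ae (Filter.Eventually.of_forall hχK)
      _ = (k : ℝ) := hEK
  have hkm : k ≤ m := by
    have hle : (k : ℝ) ≤ (m : ℝ) := by
      rw [← hqsum]
      calc ∑ j ∈ Finset.range m, (P {ω | j < K ω}).toReal
          ≤ ∑ _j ∈ Finset.range m, (1 : ℝ) := by
            refine Finset.sum_le_sum fun j _ => ?_
            have h1 : P {ω | j < K ω} ≤ 1 := prob_le_one
            have := ENNReal.toReal_mono ENNReal.one_ne_top h1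
            simpa using this
        _ = (m : ℝ) := by simp
    exact_mod_cast hle
  -- linear part
  have hlink : ∫ ω, Sf k ω ∂P = (k : ℝ) * Eξ + ((m : ℝ) - k) * Eη := by
    have h1 : ∫ ω, Sf k ω ∂P = (∑ j ∈ Finset.range k, ∫ ω, ξ j ω ∂P) +
        ∑ j ∈ Finset.Ico k m, ∫ ω, η j ω ∂P := by
      simp only [hSfdef]
      rw [integral_add (integrable_finset_sum _ fun j _ => hξint j)
        (integrable_finset_sum _ fun j _ => hηint j),
        integral_finset_sum _ fun j _ => hξint j, integral_finset_sum _ fun j _ => hηint j]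
    rw [h1, Finset.sum_congr rfl fun j _ => hEξj j, Finset.sum_congr rfl fun j _ => hEηj j,
      Finset.sum_const, Finset.sum_const, Finset.card_range, Nat.card_Ico,
      nsmul_eq_mul, nsmul_eq_mul, Nat.cast_sub hkm]
  have hχmul_int : ∀ (j : ℕ) (g : ℕ → Ω → ℝ), (∀ i, Measurable (g i)) →
      (∀ i, Integrable (g i) P) → Integrable (fun ω => χ j ω * g j ω) P := by
    intro j g hgm hgint
    refine (hgint j).abs.mono' ((hχm j).mul (hgm j)).aestronglyMeasurable
      (Filter.Eventually.of_forall fun ω => ?_)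
    rw [Real.norm_eq_abs, abs_mul]
    simp only [hχdef]
    split_ifs <;> simp [abs_nonneg]
  have hKξindep : ∀ j, IndepFun (χ j) (ξ j) P := by
    intro j
    have hKind : IndepFun K (ξ j) P :=
      hindep.indepFun (show (none : Option (ℕ ⊕ ℕ)) ≠ some (Sum.inl j) by simp)
    exact hKind.comp (φ := fun i : ℕ => if j < i then (1 : ℝ) else 0) (ψ := id)
      measurable_from_top measurable_id
  have hKηindep : ∀ j, IndepFun (χ j) (η j) P := by
    intro j
    have hKind : IndepFun K (η j) P :=
      hindep.indepFun (show (none : Option (ℕ ⊕ ℕ)) ≠ some (Sum.inr j) by simp)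
    exact hKind.comp (φ := fun i : ℕ => if j < i then (1 : ℝ) else 0) (ψ := id)
      measurable_from_top measurable_id
  have hlinK : ∫ ω, Sf (K ω) ω ∂P = (k : ℝ) * Eξ + ((m : ℝ) - k) * Eη := by
    have heq : (fun ω => Sf (K ω) ω) =
        fun ω => ∑ j ∈ Finset.range m, (if j < K ω then ξ j ω else η j ω) := funext hSK_eq
    rw [heq, integral_finset_sum _ fun j _ => hite_int j]
    have hterm : ∀ j, ∫ ω, (if j < K ω then ξ j ω else η j ω) ∂P =
        Eη + (P {ω | j < K ω}).toReal * Eξ - (P {ω | j < K ω}).toReal * Eη := by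
      intro j
      have hdecomp : (fun ω => if j < K ω then ξ j ω else η j ω) =
          fun ω => η j ω + (χ j ω * ξ j ω - χ j ω * η j ω) := by
        funext ω
        simp only [hχdef]
        split_ifs <;> ring
      have hsubint : Integrable (fun ω => χ j ω * ξ j ω - χ j ω * η j ω) P :=
        (hχmul_int j ξ hξm hξint).sub (hχmul_int j η hηm hηint)
      rw [hdecomp, integral_add (hηint j) hsubint,
        integral_sub (hχmul_int j ξ hξm hξint) (hχmul_int j η hηm hηint)]
      have hmulξ : ∫ ω, χ j ω * ξ j ω ∂P = (P {ω | j < K ω}).toReal * Eξ := by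
        have := IndepFun.integral_mul_eq_mul_integral (hKξindep j) (hχint j).1 (hξint j).1
        rw [show (χ j * ξ j) = fun ω => χ j ω * ξ j ω from rfl] at this
        rw [this, hq j, hEξj j]
      have hmulη : ∫ ω, χ j ω * η j ω ∂P = (P {ω | j < K ω}).toReal * Eη := by
        have := IndepFun.integral_mul_eq_mul_integral (hKηindep j) (hχint j).1 (hηint j).1
        rw [show (χ j * η j) = fun ω => χ j ω * η j ω from rfl] at this
        rw [this, hq j, hEηj j]
      rw [hmulξ, hmulη, hEηj j]
      ring
    rw [Finset.sum_congr rfl fun j _ => hterm j]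
    rw [Finset.sum_sub_distrib, Finset.sum_add_distrib, Finset.sum_const, Finset.card_range,
      ← Finset.sum_mul, ← Finset.sum_mul, hqsum, nsmul_eq_mul]
    ring
  have hlin : ∫ ω, Sf (K ω) ω ∂P = ∫ ω, Sf k ω ∂P := by rw [hlinK, hlink]
  
  -- convex decomposition of φ
  obtain ⟨d0, hd0⟩ := rsco_support_line hφ 0
  set ψ : ℝ → ℝ := fun x => φ x + (-d0 * x + -(φ 0)) with hψdef
  have hψconv : ConvexOn ℝ Set.univ ψ := hφ.add (rsco_affine_convexOn (-d0) (-(φ 0)))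
  have hψ0 : ∀ x, 0 ≤ ψ x := by
    intro x
    have h1 := hd0 x
    rw [sub_zero] at h1
    simp only [hψdef]
    linarith
  have hφcont : Continuous φ := continuousOn_univ.1 (hφ.continuousOn isOpen_univ)
  have hψcont : Continuous ψ := by
    simp only [hψdef]
    exact hφcont.add ((continuous_const.mul continuous_id).add continuous_const)
  have hψm : Measurable ψ := hψcont.measurable
  obtain ⟨Ψ, hΨconv, hΨlip, hΨ0, hΨle, hΨmono, hΨdense⟩ := rsco_trunc_family hψconv hψ0
  have hintk' : Integrable (fun ω => φ (Sf k ω)) P := hintk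
  have hintK' : Integrable (fun ω => φ (Sf (K ω) ω)) P := hintK
  have hψSk_int : Integrable (fun ω => ψ (Sf k ω)) P :=
    hintk'.add (((hSfint k).const_mul (-d0)).add (integrable_const _))
  have hψSK_int : Integrable (fun ω => ψ (Sf (K ω) ω)) P :=
    hintK'.add ((hSKint.const_mul (-d0)).add (integrable_const _))
  -- the weights
  set pK : ℕ → ℝ≥0∞ := fun n => P {ω | K ω = n} with hpKdef
  have hKsetEq : ∀ n, MeasurableSet {ω | K ω = n} := fun n => hKm (measurableSet_singleton n)
  have hpsum : ∑ n ∈ Finset.range (m + 1), pK n = 1 := by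
    have hdisj : (↑(Finset.range (m + 1)) : Set ℕ).PairwiseDisjoint
        (fun n => {ω | K ω = n}) := by
      intro a _ b _ hab
      simp only [Function.onFun, Set.disjoint_left]
      intro ω h1 h2
      simp only [Set.mem_setOf_eq] at h1 h2
      exact hab (by rw [← h1, ← h2])
    have hcover : (⋃ n ∈ Finset.range (m + 1), {ω | K ω = n}) = Set.univ := by
      ext ω
      simp only [Set.mem_iUnion, Set.mem_setOf_eq, Set.mem_univ, iff_true]
      exact ⟨K ω, Finset.mem_range_succ_iff.2 (hKle ω), rfl⟩
    rw [hpKdef, ← measure_biUnion_finset hdisj fun n _ => hKsetEq n, hcover, measure_univ]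
  have hprsum : ∑ n ∈ Finset.range (m + 1), (pK n).toReal = 1 := by
    rw [← ENNReal.toReal_sum fun n _ => measure_ne_top P _, hpsum, ENNReal.toReal_one]
  have hprmean : ∑ n ∈ Finset.range (m + 1), (n : ℝ) * (pK n).toReal = (k : ℝ) := by
    have hpt : ∀ ω, (K ω : ℝ) = ∑ n ∈ Finset.range (m + 1),
        (if K ω = n then (n : ℝ) else 0) := by
      intro ω
      rw [Finset.sum_ite_eq, if_pos (Finset.mem_range_succ_iff.2 (hKle ω))]
    have hterm_int : ∀ n : ℕ, Integrable (fun ω => if K ω = n then (n : ℝ) else 0) P := by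
      intro n
      refine (integrable_const ((n : ℕ) : ℝ)).mono'
        (Measurable.ite (hKsetEq n) measurable_const measurable_const).aestronglyMeasurable
        (Filter.Eventually.of_forall fun ω => ?_)
      rw [Real.norm_eq_abs]
      split_ifs
      · rw [abs_of_nonneg (Nat.cast_nonneg n)]
      · rw [abs_zero]; exact Nat.cast_nonneg n
    calc ∑ n ∈ Finset.range (m + 1), (n : ℝ) * (pK n).toReal
        = ∑ n ∈ Finset.range (m + 1), ∫ ω, (if K ω = n then (n : ℝ) else 0) ∂P := by
          refine Finset.sum_congr rfl fun n _ => ?_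
          have hind : (fun ω => if K ω = n then (n : ℝ) else 0)
              = Set.indicator {ω | K ω = n} (fun _ => (n : ℝ)) := by
            funext ω
            by_cases h : K ω = n <;> simp [Set.indicator_apply, h]
          rw [hind, integral_indicator_const _ (hKsetEq n)]
          simp [hpKdef, mul_comm, Measure.real]
      _ = ∫ ω, ∑ n ∈ Finset.range (m + 1), (if K ω = n then (n : ℝ) else 0) ∂P :=
          (integral_finset_sum _ fun n _ => hterm_int n).symm
      _ = ∫ ω, (K ω : ℝ) ∂P :=
          integral_congr_ae (Filter.Eventually.of_forall fun ω => (hpt ω).symm)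
      _ = (k : ℝ) := hEK
  -- Lebesgue integrals
  set G : ℕ → ℝ≥0∞ := fun n => ∫⁻ ω, ENNReal.ofReal (ψ (Sf n ω)) ∂P with hGdef
  set GK : ℝ≥0∞ := ∫⁻ ω, ENNReal.ofReal (ψ (Sf (K ω) ω)) ∂P with hGKdef
  have hψSfm : ∀ n, Measurable fun ω => ENNReal.ofReal (ψ (Sf n ω)) := fun n =>
    ENNReal.measurable_ofReal.comp (hψm.comp (hSfm n))
  -- partition identity
  have hGKsum : GK = ∑ n ∈ Finset.range (m + 1), pK n * G n := by
    have hpt : ∀ ω, ENNReal.ofReal (ψ (Sf (K ω) ω)) = ∑ n ∈ Finset.range (m + 1),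
        (if K ω = n then (1 : ℝ≥0∞) else 0) * ENNReal.ofReal (ψ (Sf n ω)) := by
      intro ω
      have h1 : ∀ n, (if K ω = n then (1 : ℝ≥0∞) else 0) * ENNReal.ofReal (ψ (Sf n ω))
          = if K ω = n then ENNReal.ofReal (ψ (Sf n ω)) else 0 := by
        intro n; split_ifs <;> simp
      rw [Finset.sum_congr rfl fun n _ => h1 n, Finset.sum_ite_eq,
        if_pos (Finset.mem_range_succ_iff.2 (hKle ω))]
    rw [hGKdef, lintegral_congr hpt, lintegral_finset_sum (f := fun n ω => (if K ω = n then (1 : ℝ≥0∞) else 0) *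
      ENNReal.ofReal (ψ (Sf n ω))) _ fun n _ => (Measurable.mul
      (Measurable.ite (hKsetEq n) measurable_const measurable_const) (hψSfm n) :
      Measurable fun ω => (if K ω = n then (1 : ℝ≥0∞) else 0) * ENNReal.ofReal (ψ (Sf n ω)))]
    refine Finset.sum_congr rfl fun n _ => ?_
    have hindepn : IndepFun (fun ω => if K ω = n then (1 : ℝ≥0∞) else 0)
        (fun ω => ENNReal.ofReal (ψ (Sf n ω))) P := by
      have hKS : IndepFun K
          (fun ω => ∑ j ∈ Finset.range n, ξ j ω + ∑ j ∈ Finset.Ico n m, η j ω) P :=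
        rsco_indepK hξm hηm hKm hindep (Finset.range n) (Finset.Ico n m)
      exact hKS.comp (φ := fun i : ℕ => if i = n then (1 : ℝ≥0∞) else 0)
        (ψ := fun x : ℝ => ENNReal.ofReal (ψ x)) measurable_from_top
        (ENNReal.measurable_ofReal.comp hψm)
    rw [lintegral_mul_eq_lintegral_mul_lintegral_of_indepFun''
      (Measurable.ite (hKsetEq n) measurable_const measurable_const).aemeasurable
      (hψSfm n).aemeasurable hindepn]
    congr 1
    have hind : (fun ω => if K ω = n then (1 : ℝ≥0∞) else 0)
        = Set.indicator {ω | K ω = n} (fun _ => (1 : ℝ≥0∞)) := by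
      funext ω
      by_cases h : K ω = n <;> simp [Set.indicator_apply, h]
    rw [hind, lintegral_indicator_const (hKsetEq n), one_mul]
  -- the truncated expectations
  set J : ℕ → ℕ → ℝ := fun N n => ∫ ω, Ψ N (Sf n ω) ∂P with hJdef
  have hJint : ∀ N n, Integrable (fun ω => Ψ N (Sf n ω)) P := by
    intro N n
    obtain ⟨L, hL⟩ := hΨlip N
    exact rsco_integrable_comp_lip (hSfint n) hL
  -- midconvexity of J in n
  have hmid : ∀ N n, n + 2 ≤ m → 2 * J N (n + 1) ≤ J N n + J N (n + 2) := by
    intro N n hn2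
    obtain ⟨L, hL⟩ := hΨlip N
    have hsplitIco : ∀ ω, ∑ j ∈ Finset.Ico n m, η j ω =
        η n ω + η (n + 1) ω + ∑ j ∈ Finset.Ico (n + 2) m, η j ω := by
      intro ω
      rw [← Finset.sum_Ico_consecutive (fun j => η j ω) (by omega : n ≤ n + 2) hn2]
      congr 1
      rw [Finset.sum_Ico_succ_top (by omega : n ≤ n + 1), Nat.Ico_succ_singleton,
        Finset.sum_singleton]
    have hsplit0 : ∀ ω, Sf n ω =
        (∑ j ∈ Finset.range n, ξ j ω + ∑ j ∈ Finset.Ico (n + 2) m, η j ω)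
          + η n ω + η (n + 1) ω := by
      intro ω; simp only [hSfdef]; rw [hsplitIco ω]; ring
    have hsplit1 : ∀ ω, Sf (n + 1) ω =
        (∑ j ∈ Finset.range n, ξ j ω + ∑ j ∈ Finset.Ico (n + 2) m, η j ω)
          + ξ n ω + η (n + 1) ω := by
      intro ω; simp only [hSfdef]
      rw [Finset.sum_range_succ]
      have hIco : ∑ j ∈ Finset.Ico (n + 1) m, η j ω =
          η (n + 1) ω + ∑ j ∈ Finset.Ico (n + 2) m, η j ω := by
        rw [← Finset.sum_Ico_consecutive (fun j => η j ω) (by omega : n + 1 ≤ n + 2) hn2]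
        congr 1
        rw [show n + 2 = (n + 1) + 1 from rfl, Nat.Ico_succ_singleton, Finset.sum_singleton]
      rw [hIco]; ring
    have hsplit2 : ∀ ω, Sf (n + 2) ω =
        (∑ j ∈ Finset.range n, ξ j ω + ∑ j ∈ Finset.Ico (n + 2) m, η j ω)
          + ξ n ω + ξ (n + 1) ω := by
      intro ω; simp only [hSfdef]
      rw [show n + 2 = (n + 1) + 1 from rfl, Finset.sum_range_succ, Finset.sum_range_succ]
      ring
    have hnotmem : ∀ i : ℕ ⊕ ℕ, (∀ j, j ∈ Finset.range n → Sum.inl j ≠ i) →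
        (∀ j, j ∈ Finset.Ico (n + 2) m → Sum.inr j ≠ i) →
        (some i : Option (ℕ ⊕ ℕ)) ∉ rscoT (Finset.range n) (Finset.Ico (n + 2) m) := by
      intro i h1 h2 hmem
      simp only [rscoT, Finset.mem_union, Finset.mem_image] at hmem
      rcases hmem with ⟨j, hj, hje⟩ | ⟨j, hj, hje⟩
      · exact h1 j hj (by simpa using hje)
      · exact h2 j hj (by simpa using hje)
    have hTinln : (some (Sum.inl n) : Option (ℕ ⊕ ℕ)) ∉
        rscoT (Finset.range n) (Finset.Ico (n + 2) m) := by
      refine hnotmem _ (fun j hj h => ?_) (fun j hj h => by simp at h)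
      have : j = n := by simpa using h
      have := Finset.mem_range.1 hj
      omega
    have hTinln1 : (some (Sum.inl (n + 1)) : Option (ℕ ⊕ ℕ)) ∉
        rscoT (Finset.range n) (Finset.Ico (n + 2) m) := by
      refine hnotmem _ (fun j hj h => ?_) (fun j hj h => by simp at h)
      have : j = n + 1 := by simpa using h
      have := Finset.mem_range.1 hj
      omega
    have hTinrn : (some (Sum.inr n) : Option (ℕ ⊕ ℕ)) ∉
        rscoT (Finset.range n) (Finset.Ico (n + 2) m) := by
      refine hnotmem _ (fun j hj h => by simp at h) (fun j hj h => ?_)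
      have : j = n := by simpa using h
      have := (Finset.mem_Ico.1 hj).1
      omega
    have hTinrn1 : (some (Sum.inr (n + 1)) : Option (ℕ ⊕ ℕ)) ∉
        rscoT (Finset.range n) (Finset.Ico (n + 2) m) := by
      refine hnotmem _ (fun j hj h => by simp at h) (fun j hj h => ?_)
      have : j = n + 1 := by simpa using h
      have := (Finset.mem_Ico.1 hj).1
      omega
    have hμn : Integrable id (Measure.map (mixR ξ η K (Sum.inl n)) P) := by
      rw [show mixR ξ η K (Sum.inl n) = ξ n from rfl, hξcopy n]; exact hμ1
    have hμn1 : Integrable id (Measure.map (mixR ξ η K (Sum.inl (n + 1))) P) := by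
      rw [show mixR ξ η K (Sum.inl (n + 1)) = ξ (n + 1) from rfl, hξcopy (n + 1)]; exact hμ1
    have hνn : Integrable id (Measure.map (mixR ξ η K (Sum.inr n)) P) := by
      rw [show mixR ξ η K (Sum.inr n) = η n from rfl, hηcopy n]; exact hν1
    have hνn1 : Integrable id (Measure.map (mixR ξ η K (Sum.inr (n + 1))) P) := by
      rw [show mixR ξ η K (Sum.inr (n + 1)) = η (n + 1) from rfl, hηcopy (n + 1)]; exact hν1
    have e0 := rsco_J_triple hξm hηm hKm hindep (Finset.range n) (Finset.Ico (n + 2) m)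
      hξint hηint (Sum.inr n) (Sum.inr (n + 1)) hTinrn hTinrn1 (by simp) hL hνn hνn1
    have e1 := rsco_J_triple hξm hηm hKm hindep (Finset.range n) (Finset.Ico (n + 2) m)
      hξint hηint (Sum.inl n) (Sum.inr (n + 1)) hTinln hTinrn1 (by simp) hL hμn hνn1
    have e2 := rsco_J_triple hξm hηm hKm hindep (Finset.range n) (Finset.Ico (n + 2) m)
      hξint hηint (Sum.inl n) (Sum.inl (n + 1)) hTinln hTinln1 (by simp) hL hμn hμn1
    rw [show mixR ξ η K (Sum.inr n) = η n from rfl,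
      show mixR ξ η K (Sum.inr (n + 1)) = η (n + 1) from rfl, hηcopy n, hηcopy (n + 1)] at e0
    rw [show mixR ξ η K (Sum.inl n) = ξ n from rfl,
      show mixR ξ η K (Sum.inr (n + 1)) = η (n + 1) from rfl, hξcopy n, hηcopy (n + 1)] at e1
    rw [show mixR ξ η K (Sum.inl n) = ξ n from rfl,
      show mixR ξ η K (Sum.inl (n + 1)) = ξ (n + 1) from rfl, hξcopy n, hξcopy (n + 1)] at e2
    have hJ0 : J N n = ∫ c, ∫ x, ∫ y, Ψ N (c + x + y) ∂ν ∂ν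
        ∂(Measure.map (fun ω => ∑ j ∈ Finset.range n, ξ j ω
          + ∑ j ∈ Finset.Ico (n + 2) m, η j ω) P) := by
      refine Eq.trans ?_ e0
      exact integral_congr_ae (Filter.Eventually.of_forall fun ω =>
        congrArg (Ψ N) (hsplit0 ω))
    have hJ1 : J N (n + 1) = ∫ c, ∫ x, ∫ y, Ψ N (c + x + y) ∂ν ∂μ
        ∂(Measure.map (fun ω => ∑ j ∈ Finset.range n, ξ j ω
          + ∑ j ∈ Finset.Ico (n + 2) m, η j ω) P) := by
      refine Eq.trans ?_ e1
      exact integral_congr_ae (Filter.Eventually.of_forall fun ω =>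
        congrArg (Ψ N) (hsplit1 ω))
    have hJ2 : J N (n + 2) = ∫ c, ∫ x, ∫ y, Ψ N (c + x + y) ∂μ ∂μ
        ∂(Measure.map (fun ω => ∑ j ∈ Finset.range n, ξ j ω
          + ∑ j ∈ Finset.Ico (n + 2) m, η j ω) P) := by
      refine Eq.trans ?_ e2
      exact integral_congr_ae (Filter.Eventually.of_forall fun ω =>
        congrArg (Ψ N) (hsplit2 ω))
    have hCm' : Measurable (fun ω => ∑ j ∈ Finset.range n, ξ j ω
        + ∑ j ∈ Finset.Ico (n + 2) m, η j ω) :=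
      (Finset.measurable_sum _ fun j _ => hξm j).add
        (Finset.measurable_sum _ fun j _ => hηm j)
    have hCint' : Integrable (fun ω => ∑ j ∈ Finset.range n, ξ j ω
        + ∑ j ∈ Finset.Ico (n + 2) m, η j ω) P :=
      (integrable_finset_sum _ fun j _ => hξint j).add
        (integrable_finset_sum _ fun j _ => hηint j)
    haveI : IsProbabilityMeasure (Measure.map (fun ω => ∑ j ∈ Finset.range n, ξ j ω
        + ∑ j ∈ Finset.Ico (n + 2) m, η j ω) P) := Measure.isProbabilityMeasure_map hCm'.aemeasurable
    have hγ1 : Integrable id (Measure.map (fun ω => ∑ j ∈ Finset.range n, ξ j ω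
        + ∑ j ∈ Finset.Ico (n + 2) m, η j ω) P) :=
      (integrable_map_measure aestronglyMeasurable_id hCm'.aemeasurable).2 hCint'
    have hexch := rsco_triple_exchange
      (Measure.map (fun ω => ∑ j ∈ Finset.range n, ξ j ω
        + ∑ j ∈ Finset.Ico (n + 2) m, η j ω) P) μ ν hγ1 hμ1 hν1 hstμν (hΨconv N) hL
    rw [← hJ0, ← hJ1, ← hJ2] at hexch
    linarith
  -- passing to the limit
  have hGk_toReal : ∫ ω, ψ (Sf k ω) ∂P = (G k).toReal :=
    integral_eq_lintegral_of_nonneg_ae (Filter.Eventually.of_forall fun ω => hψ0 _)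
      ((hψm.comp (hSfm k)).aestronglyMeasurable)
  have hGK_toReal : ∫ ω, ψ (Sf (K ω) ω) ∂P = GK.toReal :=
    integral_eq_lintegral_of_nonneg_ae (Filter.Eventually.of_forall fun ω => hψ0 _)
      ((hψm.comp hSKm).aestronglyMeasurable)
  have hGKne : GK ≠ ⊤ := rsco_lintegral_ofReal_ne_top hψSK_int
  have hGle : G k ≤ GK := by
    have hmeasN : ∀ N, Measurable fun ω => ENNReal.ofReal (Ψ N (Sf k ω)) := by
      intro N
      obtain ⟨L, hL⟩ := hΨlip N
      exact ENNReal.measurable_ofReal.comp (hL.continuous.measurable.comp (hSfm k))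
    have hmono' : Monotone fun N => fun ω => ENNReal.ofReal (Ψ N (Sf k ω)) := by
      intro a b hab ω
      exact ENNReal.ofReal_le_ofReal (hΨmono _ hab)
    have hmct : G k = ⨆ N, ∫⁻ ω, ENNReal.ofReal (Ψ N (Sf k ω)) ∂P := by
      have h1 : (∫⁻ ω, ⨆ N, ENNReal.ofReal (Ψ N (Sf k ω)) ∂P)
          = ⨆ N, ∫⁻ ω, ENNReal.ofReal (Ψ N (Sf k ω)) ∂P := lintegral_iSup hmeasN hmono'
      rw [← h1]
      exact lintegral_congr fun ω => (rsco_iSup_ofReal hΨmono hΨle hΨdense (Sf k ω)).symm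
    rw [hmct]
    refine iSup_le fun N => ?_
    have hN1 : ∫⁻ ω, ENNReal.ofReal (Ψ N (Sf k ω)) ∂P = ENNReal.ofReal (J N k) :=
      (ofReal_integral_eq_lintegral_ofReal (hJint N k)
        (Filter.Eventually.of_forall fun ω => hΨ0 N _)).symm
    rw [hN1]
    have hjen := rsco_jensen hkm (fun n => J N n) (fun n => (pK n).toReal)
      (fun n => ENNReal.toReal_nonneg) (fun n hn => hmid N n hn) hprsum hprmean
    calc ENNReal.ofReal (J N k)
        ≤ ENNReal.ofReal (∑ n ∈ Finset.range (m + 1), (pK n).toReal * J N n) :=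
          ENNReal.ofReal_le_ofReal hjen
      _ = ∑ n ∈ Finset.range (m + 1), ENNReal.ofReal ((pK n).toReal * J N n) := by
          rw [ENNReal.ofReal_sum_of_nonneg]
          intro n _
          exact mul_nonneg ENNReal.toReal_nonneg (integral_nonneg fun ω => hΨ0 N _)
      _ ≤ ∑ n ∈ Finset.range (m + 1), pK n * G n := by
          refine Finset.sum_le_sum fun n _ => ?_
          rw [ENNReal.ofReal_mul ENNReal.toReal_nonneg,
            ENNReal.ofReal_toReal (measure_ne_top P _)]
          refine mul_le_mul_right ?_ _
          calc ENNReal.ofReal (J N n)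
              = ∫⁻ ω, ENNReal.ofReal (Ψ N (Sf n ω)) ∂P :=
                ofReal_integral_eq_lintegral_ofReal (hJint N n)
                  (Filter.Eventually.of_forall fun ω => hΨ0 N _)
            _ ≤ G n := lintegral_mono fun ω => ENNReal.ofReal_le_ofReal (hΨle N _)
      _ = GK := hGKsum.symm
  have hψineq : ∫ ω, ψ (Sf k ω) ∂P ≤ ∫ ω, ψ (Sf (K ω) ω) ∂P := by
    rw [hGk_toReal, hGK_toReal]
    exact ENNReal.toReal_mono hGKne hGle
  -- final assembly
  show ∫ ω, φ (Sf k ω) ∂P ≤ ∫ ω, φ (Sf (K ω) ω) ∂P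
  have hdecompk : ∫ ω, φ (Sf k ω) ∂P =
      ∫ ω, ψ (Sf k ω) ∂P + (d0 * ∫ ω, Sf k ω ∂P + φ 0) := by
    have heq : (fun ω => φ (Sf k ω)) = fun ω => ψ (Sf k ω) + (d0 * Sf k ω + φ 0) := by
      funext ω; simp only [hψdef]; ring
    have hg2 : Integrable (fun ω => d0 * Sf k ω + φ 0) P :=
      ((hSfint k).const_mul d0).add (integrable_const _)
    have hg3 : Integrable (fun ω => d0 * Sf k ω) P := (hSfint k).const_mul d0
    rw [heq, integral_add hψSk_int hg2, integral_add hg3 (integrable_const _),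
      integral_const_mul, integral_const]
    simp [measure_univ]
  have hdecompK : ∫ ω, φ (Sf (K ω) ω) ∂P =
      ∫ ω, ψ (Sf (K ω) ω) ∂P + (d0 * ∫ ω, Sf (K ω) ω ∂P + φ 0) := by
    have heq : (fun ω => φ (Sf (K ω) ω)) =
        fun ω => ψ (Sf (K ω) ω) + (d0 * Sf (K ω) ω + φ 0) := by
      funext ω; simp only [hψdef]; ring
    have hg2 : Integrable (fun ω => d0 * Sf (K ω) ω + φ 0) P :=
      (hSKint.const_mul d0).add (integrable_const _)
    have hg3 : Integrable (fun ω => d0 * Sf (K ω) ω) P := hSKint.const_mul d0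
    rw [heq, integral_add hψSK_int hg2, integral_add hg3 (integrable_const _),
      integral_const_mul, integral_const]
    simp [measure_univ]
  rw [hdecompk, hdecompK, hlin]
  linarith
end

section
/- Let (ξ_1, η_1), …, (ξ_m, η_m) be i.i.d. pairs of integrable random variables with P(ξ_i ≤ η_i) = 1, and let φ : ℝ → ℝ be a non-decreasing convex function such that all expectations below exist. Then the function g : {0, 1, …, m} → ℝ defined by g(k) = E[φ( Σ_{j=1}^{k} ξ_j + Σ_{j=k+1}^{m} η_j )] is convex, i.e. g(k+1) − g(k) is non-decreasing in k for 0 ≤ k ≤ m−1. -/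
open MeasureTheory ProbabilityTheory

/-- Key convexity inequality: if `x1 ≤ y1 ≤ x2`, `x1 ≤ y2` and `x1 + x2 = y1 + y2`,
then `φ y1 + φ y2 ≤ φ x1 + φ x2` for convex `φ`. -/
lemma convex_key_ineq {φ : ℝ → ℝ} (h : ConvexOn ℝ Set.univ φ) {x1 y1 y2 x2 : ℝ}
    (h1 : x1 ≤ y1) (h2 : y1 ≤ x2) (h3 : x1 ≤ y2) (hsum : x1 + x2 = y1 + y2) :
    φ y1 + φ y2 ≤ φ x1 + φ x2 := by
  rcases eq_or_lt_of_le (le_trans h1 h2) with heq | hlt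
  · have hy1 : y1 = x1 := le_antisymm (heq ▸ h2) h1
    have hy2 : y2 = x2 := by linarith
    rw [hy1, hy2]
  · set l : ℝ := (x2 - y1) / (x2 - x1) with hl
    have hd : (0:ℝ) < x2 - x1 := by linarith
    have hl0 : 0 ≤ l := div_nonneg (by linarith) (by linarith)
    have hl1 : 0 ≤ 1 - l := by
      have : l ≤ 1 := by
        rw [hl, div_le_one hd]; linarith
      linarith
    have hy1eq : y1 = l * x1 + (1 - l) * x2 := by
      have hlm : l * (x2 - x1) = x2 - y1 := by rw [hl]; exact div_mul_cancel₀ _ hd.ne'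
      linear_combination hlm
    have hy2eq : y2 = (1 - l) * x1 + l * x2 := by
      have : y2 = x1 + x2 - y1 := by linarith
      rw [this, hy1eq]; ring
    have e1 := h.2 (Set.mem_univ x1) (Set.mem_univ x2) hl0 hl1 (by ring)
    have e2 := h.2 (Set.mem_univ x1) (Set.mem_univ x2) hl1 hl0 (by ring)
    simp only [smul_eq_mul] at e1 e2
    rw [← hy1eq] at e1
    rw [← hy2eq] at e2
    linarith

/-- key step of Lemma 4.5: for i.i.d. pairs `(ξ_i, η_i)` with
`P(ξ_i ≤ η_i) = 1` and a non-decreasing convex `φ`, the function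
`g(k) = E[φ(Σ_{j=1}^{k} ξ_j + Σ_{j=k+1}^{m} η_j)]` is convex in `k`, i.e. its first
differences `g(k+1) − g(k)` are non-decreasing in `k`. -/
theorem g_convex_in_k
    {Ω : Type*} [MeasurableSpace Ω] (P : Measure Ω) [IsProbabilityMeasure P]
    (m : ℕ) (ξ η : ℕ → Ω → ℝ)
    (hξm : ∀ j, Measurable (ξ j)) (hηm : ∀ j, Measurable (η j))
    (hξi : ∀ j, Integrable (ξ j) P) (hηi : ∀ j, Integrable (η j) P)
    -- the pairs (ξ_j, η_j) are independent across j and identically distributed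
    (hindep : iIndepFun (fun j ω => (ξ j ω, η j ω)) P)
    (hiid : ∀ j, Measure.map (fun ω => (ξ j ω, η j ω)) P =
      Measure.map (fun ω => (ξ 0 ω, η 0 ω)) P)
    -- P(ξ_j ≤ η_j) = 1
    (hle : ∀ j, ∀ᵐ ω ∂P, ξ j ω ≤ η j ω)
    (φ : ℝ → ℝ) (hφ_mono : Monotone φ) (hφ_cvx : ConvexOn ℝ Set.univ φ)
    -- all the relevant expectations exist
    (hint : ∀ k ≤ m, Integrable
      (fun ω => φ (∑ j ∈ Finset.range k, ξ j ω + ∑ j ∈ Finset.Ico k m, η j ω)) P) :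
    ∀ k, k + 2 ≤ m →
      (∫ ω, φ (∑ j ∈ Finset.range (k+1), ξ j ω + ∑ j ∈ Finset.Ico (k+1) m, η j ω) ∂P) -
        (∫ ω, φ (∑ j ∈ Finset.range k, ξ j ω + ∑ j ∈ Finset.Ico k m, η j ω) ∂P) ≤
      (∫ ω, φ (∑ j ∈ Finset.range (k+2), ξ j ω + ∑ j ∈ Finset.Ico (k+2) m, η j ω) ∂P) -
        (∫ ω, φ (∑ j ∈ Finset.range (k+1), ξ j ω + ∑ j ∈ Finset.Ico (k+1) m, η j ω) ∂P) := by
  intro k hk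
  classical
  set X : ℕ → Ω → ℝ × ℝ := fun j ω => (ξ j ω, η j ω) with hX
  have hXm : ∀ j, Measurable (X j) := fun j => (hξm j).prodMk (hηm j)
  -- the common part
  set U : Ω → ℝ := fun ω => ∑ j ∈ Finset.range k, ξ j ω + ∑ j ∈ Finset.Ico (k+2) m, η j ω
    with hU
  have hUm : Measurable U := by
    apply Measurable.add <;> exact Finset.measurable_sum _ (fun j _ => by
      first | exact hξm j | exact hηm j)
  -- rewrite the three integrands
  have hsplitB : ∀ ω, ∑ j ∈ Finset.range k, ξ j ω + ∑ j ∈ Finset.Ico k m, η j ω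
      = U ω + η k ω + η (k+1) ω := by
    intro ω
    rw [Finset.sum_eq_sum_Ico_succ_bot (show k < m by omega),
      Finset.sum_eq_sum_Ico_succ_bot (show k + 1 < m by omega)]
    simp only [hU]; ring
  have hsplitA : ∀ ω, ∑ j ∈ Finset.range (k+1), ξ j ω + ∑ j ∈ Finset.Ico (k+1) m, η j ω
      = U ω + ξ k ω + η (k+1) ω := by
    intro ω
    rw [Finset.sum_range_succ, Finset.sum_eq_sum_Ico_succ_bot (show k + 1 < m by omega)]
    simp only [hU]; ring
  have hsplitC : ∀ ω, ∑ j ∈ Finset.range (k+2), ξ j ω + ∑ j ∈ Finset.Ico (k+2) m, η j ω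
      = U ω + ξ k ω + ξ (k+1) ω := by
    intro ω
    rw [Finset.sum_range_succ, Finset.sum_range_succ]
    simp only [hU]; ring
  -- the four integrands
  set A : Ω → ℝ := fun ω => φ (U ω + ξ k ω + η (k+1) ω) with hA
  set B : Ω → ℝ := fun ω => φ (U ω + η k ω + η (k+1) ω) with hB
  set C : Ω → ℝ := fun ω => φ (U ω + ξ k ω + ξ (k+1) ω) with hC
  set D : Ω → ℝ := fun ω => φ (U ω + η k ω + ξ (k+1) ω) with hD
  -- integrabilities from hypotheses
  have hiA : Integrable A P := by
    have := hint (k+1) (by omega)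
    refine this.congr (Filter.Eventually.of_forall fun ω => ?_)
    exact congrArg φ (hsplitA ω)
  have hiB : Integrable B P := by
    have := hint k (by omega)
    refine this.congr (Filter.Eventually.of_forall fun ω => ?_)
    exact congrArg φ (hsplitB ω)
  have hiC : Integrable C P := by
    have := hint (k+2) (by omega)
    refine this.congr (Filter.Eventually.of_forall fun ω => ?_)
    exact congrArg φ (hsplitC ω)
  -- independence: U is independent of the pair (X k, X (k+1))
  set S : Finset ℕ := Finset.range k ∪ Finset.Ico (k+2) m with hS
  set T : Finset ℕ := {k, k+1} with hT
  have hST : Disjoint S T := by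
    rw [Finset.disjoint_left]
    intro a ha hat
    simp only [hS, Finset.mem_union, Finset.mem_range, Finset.mem_Ico] at ha
    simp only [hT, Finset.mem_insert, Finset.mem_singleton] at hat
    omega
  have base := hindep.indepFun_finset S T hST hXm
  have hmemk : k ∈ T := by simp [hT]
  have hmemk1 : k + 1 ∈ T := by simp [hT]
  set g1 : (S → ℝ × ℝ) → ℝ := fun x =>
    ∑ j ∈ (Finset.range k).attach,
      (x ⟨j.1, by simp only [hS, Finset.mem_union]; exact Or.inl j.2⟩).1 +
    ∑ j ∈ (Finset.Ico (k+2) m).attach,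
      (x ⟨j.1, by simp only [hS, Finset.mem_union]; exact Or.inr j.2⟩).2 with hg1
  set g2 : (T → ℝ × ℝ) → (ℝ × ℝ) × (ℝ × ℝ) := fun x => (x ⟨k, hmemk⟩, x ⟨k+1, hmemk1⟩)
    with hg2
  have hg1m : Measurable g1 := by
    apply Measurable.add <;>
      exact Finset.measurable_sum _ (fun j _ => by
        first
        | exact (measurable_pi_apply _).fst
        | exact (measurable_pi_apply _).snd)
  have hg2m : Measurable g2 :=
    (measurable_pi_apply _).prodMk (measurable_pi_apply _)
  have hcomp := base.comp hg1m hg2m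
  have hUeq : (g1 ∘ fun a (i : S) => X i a) = U := by
    funext a
    simp only [Function.comp_apply, hg1, hU, hX]
    rw [Finset.sum_attach (Finset.range k) (fun n => (X n a).1),
      Finset.sum_attach (Finset.Ico (k+2) m) (fun n => (X n a).2)]
  have hpaireq : (g2 ∘ fun a (i : T) => X i a) = fun ω => (X k ω, X (k+1) ω) := by
    funext a; rfl
  rw [hUeq, hpaireq] at hcomp
  -- hcomp : IndepFun U (fun ω => (X k ω, X (k+1) ω)) P
  have hcomp' : IndepFun U (fun ω => (X (k+1) ω, X k ω)) P := by
    have := hcomp.comp measurable_id measurable_swap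
    exact this
  have hVW : IndepFun (X k) (X (k+1)) P := hindep.indepFun (show k ≠ k+1 by omega)
  -- equality of laws of the pairs
  have hpairlaw : P.map (fun ω => (X k ω, X (k+1) ω)) = P.map (fun ω => (X (k+1) ω, X k ω)) := by
    have h1 := (indepFun_iff_map_prod_eq_prod_map_map (hXm k).aemeasurable
      (hXm (k+1)).aemeasurable).mp hVW
    have h2 := (indepFun_iff_map_prod_eq_prod_map_map (hXm (k+1)).aemeasurable
      (hXm k).aemeasurable).mp hVW.symm
    rw [h1, h2, hiid k, hiid (k+1)]
  have hpairm : Measurable (fun ω => (X k ω, X (k+1) ω)) := (hXm k).prodMk (hXm (k+1))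
  have hpairm' : Measurable (fun ω => (X (k+1) ω, X k ω)) := (hXm (k+1)).prodMk (hXm k)
  -- equality of joint laws
  have hjoint : P.map (fun ω => (U ω, (X k ω, X (k+1) ω)))
      = P.map (fun ω => (U ω, (X (k+1) ω, X k ω))) := by
    rw [(indepFun_iff_map_prod_eq_prod_map_map hUm.aemeasurable hpairm.aemeasurable).mp hcomp,
      (indepFun_iff_map_prod_eq_prod_map_map hUm.aemeasurable hpairm'.aemeasurable).mp hcomp',
      hpairlaw]
  -- transfer integral and integrability from A to D
  set F : ℝ × ((ℝ × ℝ) × (ℝ × ℝ)) → ℝ := fun p => φ (p.1 + p.2.1.1 + p.2.2.2) with hF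
  have hφmeas : Measurable φ := hφ_mono.measurable
  have hFm : Measurable F := by
    apply hφmeas.comp
    fun_prop
  have hFA : (fun ω => F (U ω, (X k ω, X (k+1) ω))) = A := by funext ω; rfl
  have hFD : (fun ω => F (U ω, (X (k+1) ω, X k ω))) = D := by
    funext ω; exact congrArg φ (by ring)
  have hm1 : Measurable (fun ω => (U ω, (X k ω, X (k+1) ω))) := hUm.prodMk hpairm
  have hm2 : Measurable (fun ω => (U ω, (X (k+1) ω, X k ω))) := hUm.prodMk hpairm'
  have hiD : Integrable D P := by
    rw [← hFD]
    have h1 : Integrable F (P.map (fun ω => (U ω, (X k ω, X (k+1) ω)))) := by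
      rw [integrable_map_measure hFm.aestronglyMeasurable hm1.aemeasurable]
      rw [show (F ∘ fun ω => (U ω, (X k ω, X (k+1) ω))) = A from hFA]
      exact hiA
    rw [hjoint] at h1
    have := (integrable_map_measure hFm.aestronglyMeasurable hm2.aemeasurable).mp h1
    exact this
  have hintDA : ∫ ω, D ω ∂P = ∫ ω, A ω ∂P := by
    rw [← hFA, ← hFD,
      ← integral_map hm1.aemeasurable hFm.aestronglyMeasurable,
      ← integral_map hm2.aemeasurable hFm.aestronglyMeasurable, hjoint]
  -- pointwise a.e. inequality: A + D ≤ B + C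
  have hptwise : ∀ᵐ ω ∂P, A ω + D ω ≤ B ω + C ω := by
    filter_upwards [hle k, hle (k+1)] with ω h1 h2
    simp only [hA, hB, hC, hD]
    have := convex_key_ineq hφ_cvx
      (x1 := U ω + ξ k ω + ξ (k+1) ω) (y1 := U ω + ξ k ω + η (k+1) ω)
      (y2 := U ω + η k ω + ξ (k+1) ω) (x2 := U ω + η k ω + η (k+1) ω)
      (by linarith) (by linarith) (by linarith) (by ring)
    linarith
  -- integrate
  have hmain : ∫ ω, A ω ∂P + ∫ ω, D ω ∂P ≤ ∫ ω, B ω ∂P + ∫ ω, C ω ∂P := by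
    rw [← integral_add hiA hiD, ← integral_add hiB hiC]
    exact integral_mono_ae (hiA.add hiD) (hiB.add hiC) hptwise
  have heqA : ∫ ω, φ (∑ j ∈ Finset.range (k+1), ξ j ω + ∑ j ∈ Finset.Ico (k+1) m, η j ω) ∂P
      = ∫ ω, A ω ∂P := by
    refine integral_congr_ae (Filter.Eventually.of_forall fun ω => ?_)
    exact congrArg φ (hsplitA ω)
  have heqB : ∫ ω, φ (∑ j ∈ Finset.range k, ξ j ω + ∑ j ∈ Finset.Ico k m, η j ω) ∂P
      = ∫ ω, B ω ∂P := by
    refine integral_congr_ae (Filter.Eventually.of_forall fun ω => ?_)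
    exact congrArg φ (hsplitB ω)
  have heqC : ∫ ω, φ (∑ j ∈ Finset.range (k+2), ξ j ω + ∑ j ∈ Finset.Ico (k+2) m, η j ω) ∂P
      = ∫ ω, C ω ∂P := by
    refine integral_congr_ae (Filter.Eventually.of_forall fun ω => ?_)
    exact congrArg φ (hsplitC ω)
  rw [heqA, heqB, heqC]
  linarith [hmain, hintDA]
end

section
/- Let 𝓑* = (B_1*, …, B_b*) be a partition of N = {1,…,n} and let {ξ_j^{B*} : B* ∈ 𝓑*, j ∈ B*} be independent real-valued random variables such that variables indexed by the same block B* are identically distributed. Let 𝒞* = (C_1*, …, C_c*) be a partition of N with 𝒞* ≤_ref 𝓑* (every block of 𝒞* is a union of blocks of 𝓑*), and let {ξ_j^{C*} : C* ∈ 𝒞*, j ∈ C*} be independent random variables where ξ_j^{C*} has the mixture law Σ_{B* ⊆ C*} (|B*|/|C*|) · L(ξ_1^{B*}). Then max_{C* ∈ 𝒞*} max_{j ∈ C*} ξ_j^{C*} ≤_st max_{B* ∈ 𝓑*} max_{j ∈ B*} ξ_j^{B*}. -/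
open MeasureTheory ProbabilityTheory
open scoped ENNReal

/-- Lemma A.1: let `𝓑*` be a partition of `Fin n` (encoded by the fiber
map `idxB : Fin n → Fin b`, block `B_i* = {j | idxB j = i}`), `{ξ_j^{B*}}` independent
random variables identically distributed within blocks, `𝒞*` a coarsening of `𝓑*`
(encoded by `idxC = ρ ∘ idxB`), and `{ξ_j^{C*}}` independent with the mixture law
`L(ξ_j^{C*}) = Σ_{B* ⊆ C*} (|B*|/|C*|)·L(ξ_1^{B*})`.  Then
`max_j ξ_j^{C*} ≤_st max_j ξ_j^{B*}`. -/
theorem mixture_max_stochastic_order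
    {Ω : Type*} [MeasurableSpace Ω] (P : Measure Ω) [IsProbabilityMeasure P]
    (n b c : ℕ) [NeZero n]
    (idxB : Fin n → Fin b) (hidxB : Function.Surjective idxB)
    (idxC : Fin n → Fin c) (hidxC : Function.Surjective idxC)
    (ρ : Fin b → Fin c) (href : ∀ j, idxC j = ρ (idxB j))
    (rep : Fin b → Fin n) (hrep : ∀ i, idxB (rep i) = i)
    (ξB ξC : Fin n → Ω → ℝ)
    (hmB : ∀ j, Measurable (ξB j)) (hmC : ∀ j, Measurable (ξC j))
    (hindB : iIndepFun ξB P)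
    (hindC : iIndepFun ξC P)
    (hident : ∀ j j', idxB j = idxB j' → Measure.map (ξB j) P = Measure.map (ξB j') P)
    (hmix : ∀ j, Measure.map (ξC j) P =
      ∑ i ∈ Finset.univ.filter (fun i => ρ i = idxC j),
        (((Finset.univ.filter fun j' => idxB j' = i).card : ENNReal) /
          ((Finset.univ.filter fun j' => idxC j' = idxC j).card : ENNReal)) •
          Measure.map (ξB (rep i)) P) :
    ∀ t : ℝ, P {ω | t < ⨆ j, ξC j ω} ≤ P {ω | t < ⨆ j, ξB j ω} := by
  intro t
  classical
  set SB : Fin n → Set Ω := fun j => ξB j ⁻¹' Set.Iic t with hSBdef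
  set SC : Fin n → Set Ω := fun j => ξC j ⁻¹' Set.Iic t with hSCdef
  have hmsB : ∀ j, MeasurableSet (SB j) := fun j => (hmB j) measurableSet_Iic
  have hmsC : ∀ j, MeasurableSet (SC j) := fun j => (hmC j) measurableSet_Iic
  have hsetB : {ω | t < ⨆ j, ξB j ω} = (⋂ j, SB j)ᶜ := by
    ext ω
    simp only [Set.mem_compl_iff, Set.mem_iInter, Set.mem_setOf_eq, Set.mem_preimage,
      Set.mem_Iic, SB, not_forall, not_le]
    exact lt_ciSup_iff (Set.finite_range _).bddAbove
  have hsetC : {ω | t < ⨆ j, ξC j ω} = (⋂ j, SC j)ᶜ := by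
    ext ω
    simp only [Set.mem_compl_iff, Set.mem_iInter, Set.mem_setOf_eq, Set.mem_preimage,
      Set.mem_Iic, SC, not_forall, not_le]
    exact lt_ciSup_iff (Set.finite_range _).bddAbove
  rw [hsetB, hsetC, prob_compl_eq_one_sub (MeasurableSet.iInter hmsC),
    prob_compl_eq_one_sub (MeasurableSet.iInter hmsB)]
  apply tsub_le_tsub_left
  rw [hindB.meas_iInter (fun j => ⟨Set.Iic t, measurableSet_Iic, rfl⟩),
    hindC.meas_iInter (fun j => ⟨Set.Iic t, measurableSet_Iic, rfl⟩)]
  -- pass to reals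
  have hfinB : ∀ j ∈ Finset.univ, P (SB j) ≠ ∞ := fun j _ => measure_ne_top P _
  have hfinC : ∀ j ∈ Finset.univ, P (SC j) ≠ ∞ := fun j _ => measure_ne_top P _
  rw [← ENNReal.toReal_le_toReal (ENNReal.prod_lt_top (fun j hj => (hfinB j hj).lt_top)).ne
    (ENNReal.prod_lt_top (fun j hj => (hfinC j hj).lt_top)).ne,
    ENNReal.toReal_prod, ENNReal.toReal_prod]
  -- notation
  set a : Fin b → ℝ := fun i => (P (SB (rep i))).toReal with ha
  have ha0 : ∀ i, 0 ≤ a i := fun i => ENNReal.toReal_nonneg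
  set NB : Fin b → ℕ := fun i => (Finset.univ.filter fun j' => idxB j' = i).card with hNB
  set NC : Fin c → ℕ := fun k => (Finset.univ.filter fun j' => idxC j' = k).card with hNC
  have hNBpos : ∀ i, 0 < NB i := by
    intro i
    refine Finset.card_pos.2 ⟨rep i, ?_⟩
    simp [hrep i]
  have hNCpos : ∀ k, 0 < NC k := by
    intro k
    obtain ⟨j, hj⟩ := hidxC k
    refine Finset.card_pos.2 ⟨j, ?_⟩
    simp [hj]
  have hsum : ∀ k, ∑ i ∈ Finset.univ.filter (fun i => ρ i = k), NB i = NC k := by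
    intro k
    have : (Finset.univ.filter fun j' => idxC j' = k) =
        (Finset.univ.filter (fun i => ρ i = k)).biUnion
          (fun i => Finset.univ.filter fun j' => idxB j' = i) := by
      ext j
      simp only [Finset.mem_filter, Finset.mem_univ, true_and, Finset.mem_biUnion, href j]
      constructor
      · intro h; exact ⟨idxB j, h, rfl⟩
      · rintro ⟨i, hi, rfl⟩; exact hi
    simp only [hNB, hNC]
    rw [this, Finset.card_biUnion]
    intro i hi i' hi' hne
    simp only [Finset.disjoint_left, Finset.mem_filter, Finset.mem_univ, true_and]
    rintro j rfl h
    exact hne h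
  -- value of the B marginals
  have hgB : ∀ j, (P (SB j)).toReal = a (idxB j) := by
    intro j
    have h1 : Measure.map (ξB j) P = Measure.map (ξB (rep (idxB j))) P :=
      hident j (rep (idxB j)) (hrep (idxB j)).symm
    have h2 : P (SB j) = P (SB (rep (idxB j))) := by
      have := congrArg (fun μ => μ (Set.Iic t)) h1
      simpa [Measure.map_apply (hmB _) measurableSet_Iic, hSBdef] using this
    rw [h2]
  -- value of the C marginals
  have hgC : ∀ j, (P (SC j)).toReal =
      ∑ i ∈ Finset.univ.filter (fun i => ρ i = idxC j),
        ((NB i : ℝ) / (NC (idxC j) : ℝ)) * a i := by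
    intro j
    have h1 := congrArg (fun μ => μ (Set.Iic t)) (hmix j)
    simp only [Measure.coe_finset_sum, Finset.sum_apply, Measure.smul_apply,
      smul_eq_mul] at h1
    rw [Measure.map_apply (hmC j) measurableSet_Iic] at h1
    have h2 : ∀ i ∈ Finset.univ.filter (fun i => ρ i = idxC j),
        (Measure.map (ξB (rep i)) P) (Set.Iic t) = P (SB (rep i)) := fun i _ =>
      Measure.map_apply (hmB _) measurableSet_Iic
    rw [show SC j = ξC j ⁻¹' Set.Iic t from rfl] at *
    rw [h1, ENNReal.toReal_sum]
    · refine Finset.sum_congr rfl fun i hi => ?_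
      rw [h2 i hi, ENNReal.toReal_mul, ENNReal.toReal_div, ENNReal.toReal_natCast, ENNReal.toReal_natCast]
    · intro i hi
      refine ENNReal.mul_ne_top ?_ (by rw [Measure.map_apply (hmB _) measurableSet_Iic]; exact measure_ne_top P _)
      refine (ENNReal.div_lt_top (by simp) ?_).ne
      have : ((NC (idxC j) : ℕ) : ENNReal) ≠ 0 := by
        simpa using (hNCpos (idxC j)).ne'
      exact this
  simp only [hgB, hgC]
  -- group the left product by fibers of idxB, then by fibers of ρ
  have hL : ∏ j : Fin n, a (idxB j) = ∏ i : Fin b, a i ^ NB i := by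
    rw [← Finset.prod_fiberwise Finset.univ idxB (fun j => a (idxB j))]
    refine Finset.prod_congr rfl fun i _ => ?_
    have heq : ∀ j ∈ Finset.univ.filter (fun j => idxB j = i), a (idxB j) = a i := by
      intro j hj; simp only [Finset.mem_filter] at hj; rw [hj.2]
    rw [Finset.prod_congr rfl heq, Finset.prod_const]
  have hR : ∏ j : Fin n,
      (∑ i ∈ Finset.univ.filter (fun i => ρ i = idxC j),
        ((NB i : ℝ) / (NC (idxC j) : ℝ)) * a i)
      = ∏ k : Fin c,
        (∑ i ∈ Finset.univ.filter (fun i => ρ i = k),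
          ((NB i : ℝ) / (NC k : ℝ)) * a i) ^ NC k := by
    rw [← Finset.prod_fiberwise Finset.univ idxC
      (fun j => ∑ i ∈ Finset.univ.filter (fun i => ρ i = idxC j),
        ((NB i : ℝ) / (NC (idxC j) : ℝ)) * a i)]
    refine Finset.prod_congr rfl fun k _ => ?_
    have heq : ∀ j ∈ Finset.univ.filter (fun j => idxC j = k),
        (∑ i ∈ Finset.univ.filter (fun i => ρ i = idxC j),
          ((NB i : ℝ) / (NC (idxC j) : ℝ)) * a i)
        = ∑ i ∈ Finset.univ.filter (fun i => ρ i = k),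
          ((NB i : ℝ) / (NC k : ℝ)) * a i := by
      intro j hj; simp only [Finset.mem_filter] at hj; rw [hj.2]
    rw [Finset.prod_congr rfl heq, Finset.prod_const]
  rw [hL, hR, ← Finset.prod_fiberwise Finset.univ ρ (fun i => a i ^ NB i)]
  refine Finset.prod_le_prod (fun k _ => Finset.prod_nonneg fun i _ => pow_nonneg (ha0 i) _)
    (fun k _ => ?_)
  -- per-block AM-GM
  set s := Finset.univ.filter (fun i => ρ i = k) with hs
  have hMne : (NC k : ℝ) ≠ 0 := Nat.cast_ne_zero.2 (hNCpos k).ne'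
  have hw0 : ∀ i ∈ s, (0:ℝ) ≤ (NB i : ℝ) / (NC k : ℝ) :=
    fun i _ => div_nonneg (Nat.cast_nonneg _) (Nat.cast_nonneg _)
  have hw1 : ∑ i ∈ s, (NB i : ℝ) / (NC k : ℝ) = 1 := by
    rw [← Finset.sum_div, ← Nat.cast_sum, hsum k, div_self hMne]
  have amgm := Real.geom_mean_le_arith_mean_weighted s
    (fun i => (NB i : ℝ) / (NC k : ℝ)) a hw0 hw1 (fun i _ => ha0 i)
  calc ∏ i ∈ s, a i ^ NB i
      = (∏ i ∈ s, a i ^ ((NB i : ℝ) / (NC k : ℝ))) ^ NC k := by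
        rw [← Finset.prod_pow]
        refine Finset.prod_congr rfl fun i _ => ?_
        rw [← Real.rpow_natCast (a i ^ ((NB i : ℝ) / (NC k : ℝ))) (NC k),
          ← Real.rpow_natCast (a i) (NB i), ← Real.rpow_mul (ha0 i),
          div_mul_cancel₀ _ hMne]
    _ ≤ (∑ i ∈ s, ((NB i : ℝ) / (NC k : ℝ)) * a i) ^ NC k :=
        pow_le_pow_left₀ (Finset.prod_nonneg fun i _ =>
          Real.rpow_nonneg (ha0 i) _) amgm _
end
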